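/- arXiv:1801.00513 — 6 statements merged into one kernel-verified Lean document; each statement's English description precedes it below -/
import Mathlib

section
/- For any positive integers n_1, ..., n_t, the sum over all permutations σ of {1,...,t} of the product of reciprocals 1/(a_1(σ)·a_2(σ)···a_t(σ)), where a_i(σ) = n_{σ(i)} + n_{σ(i+1)} + ... + n_{σ(t)}, equals 1/(n_1·n_2···n_t). -/
private lemma tail_shift {t : ℕ} (f : Fin (t + 1) → ℝ) (i : Fin t) :
    ∑ j ∈ Finset.univ.filter (fun j => i.succ ≤ j), f j
      = ∑ j ∈ Finset.univ.filter (fun j => i ≤ j), f j.succ := by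
  rw [Finset.sum_filter, Finset.sum_filter, Fin.sum_univ_succ]
  simp [Fin.succ_le_succ_iff]

private lemma stmt0_aux : ∀ (t : ℕ) (n : Fin t → ℕ), (∀ i, 1 ≤ n i) →
    ∑ σ : Equiv.Perm (Fin t),
      ∏ i : Fin t,
        (1 : ℝ) / (∑ j ∈ Finset.univ.filter (fun j => i ≤ j), (n (σ j) : ℝ))
      = 1 / ∏ i : Fin t, (n i : ℝ) := by
  intro t
  induction t with
  | zero => intro n hn; simp
  | succ t ih =>
    intro n hn
    have hNpos : (0:ℝ) < ∑ i : Fin (t+1), (n i : ℝ) := by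
      apply Finset.sum_pos
      · intro i _
        exact_mod_cast Nat.lt_of_lt_of_le Nat.zero_lt_one (hn i)
      · exact Finset.univ_nonempty
    have hPpos : (0:ℝ) < ∏ i : Fin (t+1), (n i : ℝ) := by
      apply Finset.prod_pos
      intro i _
      exact_mod_cast Nat.lt_of_lt_of_le Nat.zero_lt_one (hn i)
    rw [← Equiv.sum_comp (Equiv.Perm.decomposeFin (n := t)).symm, Fintype.sum_prod_type]
    have hterm : ∀ p : Fin (t+1), ∀ e : Equiv.Perm (Fin t),
        ∏ i : Fin (t+1),
          (1 : ℝ) / (∑ j ∈ Finset.univ.filter (fun j => i ≤ j),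
            (n ((Equiv.Perm.decomposeFin.symm (p, e)) j) : ℝ))
        = (1 / ∑ i : Fin (t+1), (n i : ℝ)) *
          ∏ i : Fin t,
            (1 : ℝ) / (∑ j ∈ Finset.univ.filter (fun j => i ≤ j),
              ((fun x => n (Equiv.swap 0 p x.succ)) (e j) : ℝ)) := by
      intro p e
      rw [Fin.prod_univ_succ]
      congr 1
      · congr 1
        rw [Finset.filter_true_of_mem (fun j _ => Fin.zero_le j)]
        exact Equiv.sum_comp (Equiv.Perm.decomposeFin.symm (p, e)) (fun j => (n j : ℝ))
      · apply Finset.prod_congr rfl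
        intro i _
        congr 1
        rw [tail_shift]
        apply Finset.sum_congr rfl
        intro j _
        rw [Equiv.Perm.decomposeFin_symm_apply_succ]
    have hswap : ∀ p : Fin (t+1),
        ∏ i : Fin t, ((n (Equiv.swap 0 p i.succ) : ℝ))
          = (∏ i : Fin (t+1), (n i : ℝ)) / (n p : ℝ) := by
      intro p
      have h1 : ∏ i : Fin (t+1), (n (Equiv.swap 0 p i) : ℝ) = ∏ i : Fin (t+1), (n i : ℝ) :=
        Equiv.prod_comp (Equiv.swap 0 p) (fun i => (n i : ℝ))
      rw [Fin.prod_univ_succ] at h1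
      have hnp : (0:ℝ) < (n p : ℝ) := by
        exact_mod_cast Nat.lt_of_lt_of_le Nat.zero_lt_one (hn p)
      rw [Equiv.swap_apply_left] at h1
      field_simp
      rw [mul_comm]
      exact h1
    calc ∑ p : Fin (t+1), ∑ e : Equiv.Perm (Fin t),
          ∏ i : Fin (t+1),
            (1 : ℝ) / (∑ j ∈ Finset.univ.filter (fun j => i ≤ j),
              (n ((Equiv.Perm.decomposeFin.symm (p, e)) j) : ℝ))
        = ∑ p : Fin (t+1), (1 / ∑ i : Fin (t+1), (n i : ℝ)) *
            ((n p : ℝ) / ∏ i : Fin (t+1), (n i : ℝ)) := by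
          apply Finset.sum_congr rfl
          intro p _
          rw [Finset.sum_congr rfl (fun e _ => hterm p e), ← Finset.mul_sum,
            ih (fun x => n (Equiv.swap 0 p x.succ)) (fun x => hn _), hswap p, one_div_div]
      _ = 1 / ∏ i : Fin (t+1), (n i : ℝ) := by
          rw [← Finset.mul_sum, ← Finset.sum_div]
          field_simp

/-- Lemma C: for positive integers `n 1, ..., n t`, the sum over all permutations `σ` of
`{1,...,t}` of `1 / (a 1 σ ⋯ a t σ)`, where `a i σ = n (σ i) + ⋯ + n (σ t)` is the tail sum,
equals `1 / (n 1 ⋯ n t)`. -/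
theorem stmt0 (t : ℕ) (ht : 1 ≤ t) (n : Fin t → ℕ) (hn : ∀ i, 1 ≤ n i) :
    ∑ σ : Equiv.Perm (Fin t),
      ∏ i : Fin t,
        (1 : ℝ) / (∑ j ∈ Finset.univ.filter (fun j => i ≤ j), (n (σ j) : ℝ))
      = 1 / ∏ i : Fin t, (n i : ℝ) := by
  exact stmt0_aux t n hn
end

section
/- For any z ∈ ℕ^n with entries in {1,...,m} where m = max_i z_i, the product over k = 1,...,m of α·Γ(e_k+1)·Γ(g_{k+1}+α)/Γ(g_k+α+1) equals (Γ(α)/Γ(n+α)) · (∏_{c ∈ C_z} Γ(|c|+1)) · ∏_{k=1}^m α/(g_k+α), where e_k = #{i : z_i = k}, g_k = #{i : z_i ≥ k}, and C_z is the partition of {1,...,n} induced by z. -/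
lemma tele_aux (f : ℕ → ℝ) (hf : ∀ k, f k ≠ 0) :
    ∀ m : ℕ, ∏ k ∈ Finset.Icc 1 m, (f (k + 1) / f k) = f (m + 1) / f 1 := by
  intro m
  induction m with
  | zero => simp [div_self (hf 1)]
  | succ m ih =>
      rw [Finset.prod_Icc_succ_top (by omega), ih, div_mul_div_comm,
        mul_comm (f 1) (f (m + 1)), mul_div_mul_left _ _ (hf (m + 1))]

/-- Lemma A computation (step (b)–(c) combined): for `z ∈ {1,2,...}^n` with maximum `m`,
`∏_{k=1}^m α·Γ(e_k+1)·Γ(g_{k+1}+α)/Γ(g_k+α+1)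
  = (Γ(α)/Γ(n+α)) · (∏_{c ∈ C_z} Γ(|c|+1)) · ∏_{k=1}^m α/(g_k+α)`,
where `e_k = #{i : z_i = k}`, `g_k = #{i : z_i ≥ k}`, and `C_z` is the partition of
`{1,...,n}` induced by `z` (blocks are the level sets of `z`). -/
theorem stmt3 (n m : ℕ) (hn : 1 ≤ n) (α : ℝ) (hα : 0 < α)
    (z : Fin n → ℕ) (hz : ∀ i, 1 ≤ z i) (hm : m = Finset.univ.sup z) :
    ∏ k ∈ Finset.Icc 1 m,
        (α * Real.Gamma ((Finset.univ.filter (fun i => z i = k)).card + 1) *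
          Real.Gamma ((Finset.univ.filter (fun i => k + 1 ≤ z i)).card + α) /
          Real.Gamma ((Finset.univ.filter (fun i => k ≤ z i)).card + α + 1))
      = (Real.Gamma α / Real.Gamma (n + α)) *
        (∏ c ∈ (Finset.image z Finset.univ).image
            (fun k => Finset.univ.filter (fun i => z i = k)),
          Real.Gamma (c.card + 1)) *
        ∏ k ∈ Finset.Icc 1 m,
          (α / ((Finset.univ.filter (fun i => k ≤ z i)).card + α)) := by
  classical
  set e : ℕ → ℕ := fun k => (Finset.univ.filter (fun i => z i = k)).card with he
  set g : ℕ → ℕ := fun k => (Finset.univ.filter (fun i => k ≤ z i)).card with hg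
  have hgpos : ∀ k : ℕ, (0:ℝ) < (g k : ℝ) + α := fun k => by positivity
  have hGne : ∀ k : ℕ, Real.Gamma ((g k : ℝ) + α) ≠ 0 :=
    fun k => (Real.Gamma_pos_of_pos (hgpos k)).ne'
  -- g 1 = n
  have hg1 : g 1 = n := by
    have : (Finset.univ.filter (fun i : Fin n => 1 ≤ z i)) = Finset.univ := by
      ext i; simp [hz i]
    simp [hg, this]
  -- g (m+1) = 0
  have hgm : g (m + 1) = 0 := by
    have : (Finset.univ.filter (fun i : Fin n => m + 1 ≤ z i)) = ∅ := by
      ext i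
      simp only [Finset.mem_filter, Finset.mem_univ, true_and, Finset.notMem_empty,
        iff_false, not_le]
      have := Finset.le_sup (f := z) (Finset.mem_univ i)
      omega
    show (Finset.univ.filter (fun i : Fin n => m + 1 ≤ z i)).card = 0
    rw [this]; rfl
  -- pointwise factorization
  have key : ∀ k ∈ Finset.Icc 1 m,
      α * Real.Gamma ((e k : ℝ) + 1) *
          Real.Gamma ((g (k+1) : ℝ) + α) / Real.Gamma ((g k : ℝ) + α + 1)
        = Real.Gamma ((e k : ℝ) + 1) *
            (Real.Gamma ((g (k+1) : ℝ) + α) / Real.Gamma ((g k : ℝ) + α)) *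
            (α / ((g k : ℝ) + α)) := by
    intro k _
    rw [Real.Gamma_add_one (hgpos k).ne']
    have h1 := hGne k
    have h2 := (hgpos k).ne'
    field_simp
  rw [Finset.prod_congr rfl key, Finset.prod_mul_distrib, Finset.prod_mul_distrib]
  -- telescoping
  have htel : ∏ k ∈ Finset.Icc 1 m,
      (Real.Gamma ((g (k+1) : ℝ) + α) / Real.Gamma ((g k : ℝ) + α))
      = Real.Gamma α / Real.Gamma ((n:ℝ) + α) := by
    rw [tele_aux (fun k => Real.Gamma ((g k : ℝ) + α)) hGne m, hgm, hg1]
    norm_num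
  rw [htel]
  -- partition product
  have hinj : Set.InjOn (fun k => Finset.univ.filter (fun i => z i = k))
      (Finset.image z Finset.univ : Finset ℕ) := by
    intro a ha b hb hab
    simp only [Finset.coe_image, Set.mem_image] at ha
    obtain ⟨i, _, hi⟩ := ha
    have : i ∈ Finset.univ.filter (fun j => z j = a) := by simp [hi]
    simp only at hab
    rw [hab] at this
    simp only [Finset.mem_filter] at this
    omega
  have hsub : (Finset.image z Finset.univ : Finset ℕ) ⊆ Finset.Icc 1 m := by
    intro k hk
    simp only [Finset.mem_image] at hk
    obtain ⟨i, _, hi⟩ := hk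
    have h1 := hz i
    have h2 := Finset.le_sup (f := z) (Finset.mem_univ i)
    simp only [Finset.mem_Icc]
    omega
  have hpart : (∏ c ∈ (Finset.image z Finset.univ).image
        (fun k => Finset.univ.filter (fun i => z i = k)),
        Real.Gamma ((c.card : ℝ) + 1))
      = ∏ k ∈ Finset.Icc 1 m, Real.Gamma ((e k : ℝ) + 1) := by
    rw [Finset.prod_image (fun a ha b hb => hinj ha hb)]
    refine Finset.prod_subset hsub ?_
    intro k _ hk
    have : (Finset.univ.filter (fun i => z i = k)) = ∅ := by
      ext i
      simp only [Finset.mem_filter, Finset.mem_univ, true_and, Finset.notMem_empty,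
        iff_false]
      intro h
      exact hk (Finset.mem_image.mpr ⟨i, Finset.mem_univ i, h⟩)
    simp [he, this, Real.Gamma_one]
  rw [hpart]
  ring
end

section
/- Let z_1,...,z_n be i.i.d. draws from a probability vector π on ℕ where π_k = v_k ∏_{i<k}(1-v_i) with v_1, v_2, ... i.i.d. Beta(1,α). Then for any fixed z ∈ ℕ^n, P(z_1,...,z_n = z) = (Γ(α)/Γ(n+α)) · (∏_{c ∈ C_z} Γ(|c|+1)) · ∏_{k=1}^m α/(g_k+α), where m = max_i z_i, g_k = #{i : z_i ≥ k}, and C_z is the partition induced by z. -/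
open MeasureTheory ProbabilityTheory

/-- The Beta(1,α) distribution on `[0,1]`, with density `α(1-x)^{α-1}`. -/
noncomputable def betaOne (α : ℝ) : Measure ℝ :=
  (volume.restrict (Set.Ioo (0:ℝ) 1)).withDensity
    (fun x => ENNReal.ofReal (α * (1 - x) ^ (α - 1)))

lemma real_beta (p q : ℝ) (hp : 0 < p) (hq : 0 < q) :
    ∫ x in Set.Ioo (0:ℝ) 1, x ^ (p-1) * (1-x) ^ (q-1) =
      Real.Gamma p * Real.Gamma q / Real.Gamma (p+q) := by
  have h1 : Complex.betaIntegral p q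
      = Complex.ofReal (∫ x in (0:ℝ)..1, x^(p-1)*(1-x)^(q-1)) := by
    rw [Complex.betaIntegral, ← intervalIntegral.integral_ofReal]
    apply intervalIntegral.integral_congr
    intro x hx
    rw [Set.uIcc_of_le zero_le_one, Set.mem_Icc] at hx
    show (x:ℂ) ^ ((p:ℂ) - 1) * (1 - (x:ℂ)) ^ ((q:ℂ) - 1) = ((x ^ (p-1) * (1-x) ^ (q-1) : ℝ) : ℂ)
    rw [show ((x ^ (p-1) * (1-x) ^ (q-1) : ℝ) : ℂ)
        = ((x ^ (p-1) : ℝ) : ℂ) * (((1-x) ^ (q-1) : ℝ) : ℂ) from Complex.ofReal_mul _ _,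
      Complex.ofReal_cpow hx.1, Complex.ofReal_cpow (by linarith : (0:ℝ) ≤ 1-x)]
    push_cast
    ring
  have h2 := Complex.Gamma_mul_Gamma_eq_betaIntegral
    (s := (p:ℂ)) (t := (q:ℂ)) (by simpa using hp) (by simpa using hq)
  rw [h1, Complex.Gamma_ofReal, Complex.Gamma_ofReal,
    (by push_cast; ring : (p:ℂ) + q = ((p+q : ℝ) : ℂ)), Complex.Gamma_ofReal,
    ← Complex.ofReal_mul, ← Complex.ofReal_mul] at h2
  have h3 : Real.Gamma p * Real.Gamma q
      = Real.Gamma (p+q) * ∫ x in (0:ℝ)..1, x^(p-1)*(1-x)^(q-1) :=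
    Complex.ofReal_injective h2
  have h4 : (0:ℝ) < Real.Gamma (p+q) := Real.Gamma_pos_of_pos (by linarith)
  rw [intervalIntegral.integral_of_le zero_le_one,
    MeasureTheory.integral_Ioc_eq_integral_Ioo] at h3
  field_simp
  linarith [h3]

lemma betaOne_moment (α : ℝ) (hα : 0 < α) (a b : ℕ) :
    ∫ x, |x| ^ a * |1 - x| ^ b ∂(betaOne α) =
      α * (Real.Gamma ((a:ℝ)+1) * Real.Gamma ((b:ℝ)+α)
        / Real.Gamma (((a:ℝ)+1) + ((b:ℝ)+α))) := by
  have hd : Measurable fun x : ℝ => (α * (1 - x) ^ (α - 1)).toNNReal :=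
    (by fun_prop : Measurable fun x : ℝ => α * (1 - x) ^ (α - 1)).real_toNNReal
  have key : ∫ x, |x| ^ a * |1 - x| ^ b ∂(betaOne α)
      = ∫ x in Set.Ioo (0:ℝ) 1,
          (α * (1 - x) ^ (α - 1)).toNNReal • (|x| ^ a * |1 - x| ^ b) := by
    rw [betaOne]
    exact integral_withDensity_eq_integral_smul hd _
  rw [key]
  rw [show ∫ x in Set.Ioo (0:ℝ) 1,
        (α * (1 - x) ^ (α - 1)).toNNReal • (|x| ^ a * |1 - x| ^ b)
      = ∫ x in Set.Ioo (0:ℝ) 1,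
        α * (x ^ (((a:ℝ)+1) - 1) * (1-x) ^ (((b:ℝ)+α) - 1)) from
    setIntegral_congr_fun measurableSet_Ioo (fun x hx => by
      obtain ⟨hx0, hx1⟩ := hx
      have h1x : (0:ℝ) < 1 - x := by linarith
      have hdnn : 0 ≤ α * (1 - x) ^ (α - 1) :=
        mul_nonneg hα.le (Real.rpow_nonneg h1x.le _)
      rw [NNReal.smul_def, smul_eq_mul, Real.coe_toNNReal _ hdnn,
        abs_of_pos hx0, abs_of_pos h1x]
      rw [show ((a:ℝ)+1) - 1 = (a:ℝ) by ring, Real.rpow_natCast]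
      rw [show ((b:ℝ)+α) - 1 = (α - 1) + (b:ℝ) by ring,
        Real.rpow_add h1x, Real.rpow_natCast]
      ring)]
  rw [MeasureTheory.integral_const_mul,
    real_beta ((a:ℝ)+1) ((b:ℝ)+α) (by positivity) (by positivity)]

lemma indep_prod_integral {Ω : Type*} [MeasurableSpace Ω] {P : Measure Ω}
    [IsProbabilityMeasure P] {v : ℕ → Ω → ℝ} (hv_meas : ∀ i, Measurable (v i))
    (hv_indep : iIndepFun v P)
    (f : ℕ → ℝ → ℝ) (hf : ∀ k, Measurable (f k)) (hpos : ∀ k x, 0 ≤ f k x)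
    (s : Finset ℕ) :
    ∫ ω, ∏ k ∈ s, f k (v k ω) ∂P = ∏ k ∈ s, ∫ ω, f k (v k ω) ∂P := by
  classical
  have hX : iIndepFun (fun k ω => f k (v k ω)) P :=
    hv_indep.comp _ hf
  have hXm : ∀ k, Measurable fun ω => f k (v k ω) := fun k => (hf k).comp (hv_meas k)
  induction s using Finset.induction_on with
  | empty => simp
  | @insert i s hi ih =>
    have hY : Measurable fun ω => ∏ k ∈ s, f k (v k ω) :=
      Finset.measurable_prod s (fun k _ => hXm k)
    have hind : IndepFun (fun ω => f i (v i ω)) (fun ω => ∏ k ∈ s, f k (v k ω)) P := by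
      have := (hX.indepFun_finsetProd_of_notMem hXm hi).symm
      convert this using 1
      funext ω
      simp [Finset.prod_apply]
    have := hind.integral_fun_mul_eq_mul_integral
      (hXm i).aestronglyMeasurable hY.aestronglyMeasurable
    simp_rw [Finset.prod_insert hi]
    rw [← ih]
    exact this

lemma telescope (h : ℕ → ℝ) (hpos : ∀ k, 0 < h k) (m : ℕ) :
    ∏ k ∈ Finset.Icc 1 m, (h (k+1) / h k) = h (m+1) / h 1 := by
  induction m with
  | zero => simp [(hpos 1).ne']
  | succ m ih =>
    rw [Finset.prod_Icc_succ_top (by omega), ih]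
    rw [div_mul_div_comm, mul_comm (h (m+1)) (h (m+1+1)), mul_comm (h 1) (h (m+1)),
      mul_comm (h (m+1+1)) (h (m+1)), mul_div_mul_left _ _ (hpos (m+1)).ne']

/-- Lemma A: if `v 1, v 2, ...` are i.i.d. Beta(1,α), `π k = v k ∏_{i<k} (1 - v i)` are the
stick-breaking weights, and `Z = (z 1, ..., z n)` are conditionally i.i.d. draws from `π`
(so that `P(Z = y) = E[∏ i, π (y i)]`), then for any fixed `z ∈ {1,2,...}^n`,
`P(Z = z) = (Γ(α)/Γ(n+α)) · (∏_{c ∈ C_z} Γ(|c|+1)) · ∏_{k=1}^m α/(g_k+α)`,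
where `m = max_i z_i`, `g_k = #{i : z_i ≥ k}`, and `C_z` is the induced partition. -/
theorem stmt4 {Ω : Type*} [MeasurableSpace Ω] (P : Measure Ω) [IsProbabilityMeasure P]
    (α : ℝ) (hα : 0 < α) (v : ℕ → Ω → ℝ)
    (hv_meas : ∀ i, Measurable (v i))
    (hv_indep : iIndepFun v P)
    (hv_law : ∀ i, P.map (v i) = betaOne α)
    (n : ℕ) (hn : 1 ≤ n)
    (π : ℕ → Ω → ℝ)
    (hπ : ∀ k ω, π k ω = v k ω * ∏ i ∈ Finset.Ico 1 k, (1 - v i ω))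
    (Z : Ω → Fin n → ℕ)
    (hZ : ∀ y : Fin n → ℕ, (∀ i, 1 ≤ y i) →
      P {ω | Z ω = y} = ENNReal.ofReal (∫ ω, ∏ i, π (y i) ω ∂P))
    (z : Fin n → ℕ) (hz : ∀ i, 1 ≤ z i) (m : ℕ) (hm : m = Finset.univ.sup z) :
    (P {ω | Z ω = z}).toReal =
      (Real.Gamma α / Real.Gamma (n + α)) *
        (∏ c ∈ (Finset.image z Finset.univ).image
            (fun k => Finset.univ.filter (fun i => z i = k)),
          Real.Gamma (c.card + 1)) *
        ∏ k ∈ Finset.Icc 1 m,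
          (α / ((Finset.univ.filter (fun i => k ≤ z i)).card + α)) := by
  classical
  set a : ℕ → ℕ := fun k => (Finset.univ.filter fun i => z i = k).card with ha
  set g : ℕ → ℕ := fun k => (Finset.univ.filter fun i => k ≤ z i).card with hg
  set f : ℕ → ℝ → ℝ := fun k x => |x| ^ a k * |1 - x| ^ g (k+1) with hfdef
  have hf_meas : ∀ k, Measurable (f k) := fun k =>
    ((continuous_abs.pow _).mul
      (((continuous_const.sub continuous_id).abs).pow _)).measurable
  have hf_pos : ∀ k x, 0 ≤ f k x := fun k x =>
    mul_nonneg (pow_nonneg (abs_nonneg _) _) (pow_nonneg (abs_nonneg _) _)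
  have hzm : ∀ i, z i ∈ Finset.Icc 1 m := fun i =>
    Finset.mem_Icc.mpr ⟨hz i, hm ▸ Finset.le_sup (Finset.mem_univ i)⟩
  -- pointwise algebraic identity
  have hsplit : ∀ ω, ∏ i, π (z i) ω
      = ∏ k ∈ Finset.Icc 1 m, (v k ω ^ a k * (1 - v k ω) ^ g (k+1)) := by
    intro ω
    have h1 : ∏ i, v (z i) ω = ∏ k ∈ Finset.Icc 1 m, v k ω ^ a k := by
      rw [← Finset.prod_fiberwise_of_maps_to (fun i _ => hzm i) (fun i => v (z i) ω)]
      refine Finset.prod_congr rfl fun k _ => ?_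
      have he : ∏ i ∈ Finset.univ.filter (fun i => z i = k), v (z i) ω
          = ∏ i ∈ Finset.univ.filter (fun i => z i = k), v k ω :=
        Finset.prod_congr rfl fun i hi => by rw [(Finset.mem_filter.mp hi).2]
      rw [he, Finset.prod_const]
    have h2 : ∏ i, ∏ j ∈ Finset.Ico 1 (z i), (1 - v j ω)
        = ∏ k ∈ Finset.Icc 1 m, (1 - v k ω) ^ g (k+1) := by
      have hIco : ∀ i : Fin n, Finset.Ico 1 (z i)
          = (Finset.Icc 1 m).filter (fun j => j + 1 ≤ z i) := by
        intro i
        have hzi := Finset.mem_Icc.mp (hzm i)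
        ext j
        simp only [Finset.mem_Ico, Finset.mem_filter, Finset.mem_Icc]
        omega
      simp_rw [hIco, Finset.prod_filter]
      rw [Finset.prod_comm]
      refine Finset.prod_congr rfl fun k _ => ?_
      rw [Finset.prod_ite, Finset.prod_const, Finset.prod_const_one, mul_one]
    calc ∏ i, π (z i) ω
        = (∏ i, v (z i) ω) * ∏ i, ∏ j ∈ Finset.Ico 1 (z i), (1 - v j ω) := by
          simp_rw [hπ]; rw [Finset.prod_mul_distrib]
      _ = _ := by rw [h1, h2, ← Finset.prod_mul_distrib]
  -- a.e. the v's are in (0,1)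
  have hae1 : ∀ k, ∀ᵐ ω ∂P, v k ω ∈ Set.Ioo (0:ℝ) 1 := by
    intro k
    have hmeas : MeasurableSet (Set.Ioo (0:ℝ) 1) := measurableSet_Ioo
    have h0 : P.map (v k) (Set.Ioo (0:ℝ) 1)ᶜ = 0 := by
      rw [hv_law k, betaOne, withDensity_apply _ hmeas.compl,
        Measure.restrict_restrict hmeas.compl]
      simp [Set.compl_inter_self]
    rw [Measure.map_apply (hv_meas k) hmeas.compl] at h0
    exact ae_iff.mpr h0
  have hae : ∀ᵐ ω ∂P, ∀ k ∈ Finset.Icc 1 m, v k ω ∈ Set.Ioo (0:ℝ) 1 :=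
    ((Finset.Icc 1 m).eventually_all).mpr fun k _ => hae1 k
  have hint : ∫ ω, ∏ i, π (z i) ω ∂P
      = ∫ ω, ∏ k ∈ Finset.Icc 1 m, f k (v k ω) ∂P := by
    refine integral_congr_ae ?_
    filter_upwards [hae] with ω hω
    rw [hsplit ω]
    refine Finset.prod_congr rfl fun k hk => ?_
    obtain ⟨h0, h1⟩ := hω k hk
    rw [hfdef]
    simp only
    rw [abs_of_pos h0, abs_of_pos (by linarith : (0:ℝ) < 1 - v k ω)]
  -- single moments
  have hone : ∀ k, ∫ ω, f k (v k ω) ∂P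
      = α * (Real.Gamma ((a k:ℝ)+1) * Real.Gamma ((g (k+1):ℝ)+α)
        / Real.Gamma (((a k:ℝ)+1) + ((g (k+1):ℝ)+α))) := by
    intro k
    rw [← betaOne_moment α hα (a k) (g (k+1)), ← hv_law k,
      integral_map (hv_meas k).aemeasurable (hf_meas k).aestronglyMeasurable]
  -- counting identities
  have hgrec : ∀ k, g k = a k + g (k+1) := by
    intro k
    rw [hg, ha]
    simp only
    rw [show (Finset.univ.filter fun i => k ≤ z i)
        = (Finset.univ.filter fun i => z i = k) ∪ (Finset.univ.filter fun i => k+1 ≤ z i) from by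
      ext i; simp only [Finset.mem_filter, Finset.mem_union, Finset.mem_univ, true_and]; omega]
    rw [Finset.card_union_of_disjoint (by
      rw [Finset.disjoint_left]
      intro i hi1 hi2
      rw [Finset.mem_filter] at hi1 hi2
      omega)]
  have hgm : g (m+1) = 0 := by
    rw [hg]
    simp only
    rw [Finset.card_eq_zero, Finset.filter_eq_empty_iff]
    intro i _
    have := Finset.mem_Icc.mp (hzm i)
    omega
  have hg1 : g 1 = n := by
    rw [hg]
    simp only
    rw [Finset.filter_true_of_mem (fun i _ => hz i), Finset.card_univ, Fintype.card_fin]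
  -- Gamma telescoping setup
  set h : ℕ → ℝ := fun k => Real.Gamma ((g k : ℝ) + α) with hhdef
  have hhpos : ∀ k, 0 < h k := fun k => Real.Gamma_pos_of_pos (add_pos_of_nonneg_of_pos (Nat.cast_nonneg _) hα)
  have hterm : ∀ k, α * (Real.Gamma ((a k:ℝ)+1) * Real.Gamma ((g (k+1):ℝ)+α)
        / Real.Gamma (((a k:ℝ)+1) + ((g (k+1):ℝ)+α)))
      = (α / ((g k:ℝ) + α)) * (Real.Gamma ((a k:ℝ)+1) * (h (k+1) / h k)) := by
    intro k
    have e1 : ((a k:ℝ)+1) + ((g (k+1):ℝ)+α) = ((g k:ℝ) + α) + 1 := by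
      have := hgrec k
      push_cast [this]
      ring
    rw [e1, Real.Gamma_add_one ((add_pos_of_nonneg_of_pos (Nat.cast_nonneg _) hα).ne' : ((g k:ℝ) + α) ≠ 0)]
    rw [hhdef]
    simp only
    have h1 : (0:ℝ) < (g k:ℝ) + α := add_pos_of_nonneg_of_pos (Nat.cast_nonneg _) hα
    have h2 := hhpos k
    rw [hhdef] at h2
    simp only at h2
    field_simp
  -- the block product
  have hblocks : (∏ c ∈ (Finset.image z Finset.univ).image
        (fun k => Finset.univ.filter (fun i => z i = k)),
        Real.Gamma (c.card + 1))
      = ∏ k ∈ Finset.Icc 1 m, Real.Gamma ((a k:ℝ) + 1) := by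
    rw [Finset.prod_image (fun k1 hk1 k2 hk2 he => by
      obtain ⟨i, _, hi⟩ := Finset.mem_image.mp hk1
      have : i ∈ Finset.univ.filter (fun j => z j = k1) := by
        rw [Finset.mem_filter]; exact ⟨Finset.mem_univ i, hi⟩
      rw [he, Finset.mem_filter] at this
      omega)]
    refine Finset.prod_subset (fun k hk => ?_) (fun k _ hk => ?_)
    · obtain ⟨i, _, hi⟩ := Finset.mem_image.mp hk
      exact hi ▸ hzm i
    · have hempty : Finset.univ.filter (fun i => z i = k) = ∅ := by
        rw [Finset.filter_eq_empty_iff]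
        intro i _
        exact fun he => hk (Finset.mem_image.mpr ⟨i, Finset.mem_univ i, he⟩)
      rw [hempty]
      simp [Real.Gamma_one]
  -- put everything together
  rw [hZ z hz, hint,
    ENNReal.toReal_ofReal (integral_nonneg fun ω =>
      Finset.prod_nonneg fun k _ => hf_pos k _),
    indep_prod_integral hv_meas hv_indep f hf_meas hf_pos,
    Finset.prod_congr rfl (fun k _ => (hone k).trans (hterm k)),
    Finset.prod_mul_distrib, Finset.prod_mul_distrib, telescope h hhpos m]
  rw [show h (m+1) = Real.Gamma α by rw [hhdef]; simp only; rw [hgm]; norm_num,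
    show h 1 = Real.Gamma ((n:ℝ) + α) by rw [hhdef]; simp only; rw [hg1],
    hblocks]
  ring
end

section
/- For any partition C of {1,...,n}, the sum over all z ∈ ℕ^n inducing partition C of ∏_{k=1}^{m(z)} α/(g_k(z)+α) equals α^{|C|} / ∏_{c ∈ C} |c|, where m(z) = max_i z_i and g_k(z) = #{i : z_i ≥ k}. -/
open scoped ENNReal

namespace Stmt6Aux

lemma prod_Icc_one {M : Type*} [CommMonoid M] (m : ℕ) (h : ℕ → M) :
    ∏ k ∈ Finset.Icc 1 m, h k = ∏ j ∈ Finset.range m, h (j + 1) := by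
  rw [← Finset.Ico_add_one_right_eq_Icc, Finset.prod_Ico_eq_prod_range]
  simp [add_comm]

lemma geom_sum (a W : ℝ≥0∞) (ha : a ≠ 0) (ha' : a ≠ ⊤) (hW : W ≠ 0) (hW' : W ≠ ⊤) :
    ∑' d : ℕ+, (a / (W + a)) ^ (d : ℕ) = a / W := by
  have hWa : W + a ≠ 0 := by simp [hW]
  have hWa' : W + a ≠ ⊤ := by simp [hW', ha', ENNReal.add_ne_top]
  have hr' : a / (W + a) ≠ ⊤ := (ENNReal.div_lt_top ha' hWa).ne
  have h1 : (1 : ℝ≥0∞) - a / (W + a) = W / (W + a) := by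
    refine ENNReal.sub_eq_of_eq_add hr' ?_
    rw [ENNReal.div_add_div_same, ENNReal.div_self hWa hWa']
  have h2 : ∑' d : ℕ+, (a / (W + a)) ^ (d : ℕ)
      = ∑' n : ℕ, (a / (W + a)) ^ (n + 1) := by
    rw [← Equiv.tsum_eq Equiv.pnatEquivNat.symm (fun d : ℕ+ => (a / (W + a)) ^ (d : ℕ))]
    congr 1
  rw [h2, ENNReal.tsum_geometric_add_one, h1,
    ENNReal.inv_div (Or.inl hWa') (Or.inl hWa)]
  have : a / (W + a) * ((W + a) / W) = a * ((W + a)⁻¹ * (W + a)) / W := by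
    rw [div_eq_mul_inv, div_eq_mul_inv, div_eq_mul_inv]; ring
  rw [this, ENNReal.inv_mul_cancel hWa hWa', mul_one]



open Stmt6Aux

/-- The core term. -/
noncomputable def term (a : ℝ≥0∞) {ι : Type} [Fintype ι] (w : ι → ℕ) (f : ι → ℕ) : ℝ≥0∞ :=
  ∏ k ∈ Finset.Icc 1 (Finset.univ.sup f),
    a / ((∑ i ∈ Finset.univ.filter (fun i => k ≤ f i), (w i : ℝ≥0∞)) + a)

def phiFun {ι : Type} [DecidableEq ι] (b : ι) (d : ℕ+) (f : {i : ι // i ≠ b} → ℕ) : ι → ℕ :=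
  fun i => if h : i = b then (d : ℕ) else f ⟨i, h⟩ + d

lemma phiFun_apply_b {ι : Type} [DecidableEq ι] (b : ι) (d : ℕ+) (f : {i : ι // i ≠ b} → ℕ) :
    phiFun b d f b = d := by simp [phiFun]

lemma phiFun_apply_ne {ι : Type} [DecidableEq ι] {b : ι} (d : ℕ+) (f : {i : ι // i ≠ b} → ℕ)
    (i : {i : ι // i ≠ b}) : phiFun b d f i = f i + d := by
  simp [phiFun, i.2]

lemma sup_phiFun {ι : Type} [Fintype ι] [DecidableEq ι] (b : ι) (d : ℕ+)
    (f : {i : ι // i ≠ b} → ℕ) :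
    Finset.univ.sup (phiFun b d f) = Finset.univ.sup f + d := by
  apply le_antisymm
  · apply Finset.sup_le
    intro i _
    by_cases h : i = b
    · subst h; rw [phiFun_apply_b]; omega
    · rw [phiFun_apply_ne d f ⟨i, h⟩]
      exact Nat.add_le_add_right (Finset.le_sup (f := f) (Finset.mem_univ _)) (d : ℕ)
  · rcases isEmpty_or_nonempty {i : ι // i ≠ b} with hE | hNe
    · rw [Finset.univ_eq_empty (α := {i : ι // i ≠ b}), Finset.sup_empty]
      calc (⊥ : ℕ) + (d : ℕ) = phiFun b d f b := by rw [phiFun_apply_b]; simp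
        _ ≤ _ := Finset.le_sup (Finset.mem_univ b)
    · obtain ⟨i0, -, hi0⟩ := Finset.exists_mem_eq_sup Finset.univ (Finset.univ_nonempty (α := {i : ι // i ≠ b})) f
      calc Finset.univ.sup f + (d : ℕ) = phiFun b d f i0 := by
            rw [phiFun_apply_ne, hi0]
        _ ≤ _ := Finset.le_sup (Finset.mem_univ _)

lemma gsum_phi_le {ι : Type} [Fintype ι] [DecidableEq ι] (w : ι → ℕ) (b : ι) (d : ℕ+)
    (f : {i : ι // i ≠ b} → ℕ) (hf1 : ∀ i, 1 ≤ f i) {k : ℕ} (hk : k ≤ d) :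
    ∑ i ∈ Finset.univ.filter (fun i => k ≤ phiFun b d f i), (w i : ℝ≥0∞)
      = ∑ i, (w i : ℝ≥0∞) := by
  have hall : ∀ i ∈ Finset.univ, k ≤ phiFun b d f i := by
    intro i _
    by_cases h : i = b
    · subst h; rw [phiFun_apply_b]; omega
    · rw [phiFun_apply_ne d f ⟨i, h⟩]; have := hf1 ⟨i, h⟩; omega
  rw [Finset.filter_true_of_mem hall]

lemma gsum_phi_gt {ι : Type} [Fintype ι] [DecidableEq ι] (w : ι → ℕ) (b : ι) (d : ℕ+)
    (f : {i : ι // i ≠ b} → ℕ) {k : ℕ} (hk : (d : ℕ) < k) :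
    ∑ i ∈ Finset.univ.filter (fun i => k ≤ phiFun b d f i), (w i : ℝ≥0∞)
      = ∑ i' ∈ Finset.univ.filter (fun i' : {i : ι // i ≠ b} => k - d ≤ f i'), (w i'.1 : ℝ≥0∞) := by
  have step : ∀ i' : {i : ι // i ≠ b},
      (if k ≤ phiFun b d f i'.1 then (w i'.1 : ℝ≥0∞) else 0)
        = (if k - (d : ℕ) ≤ f i' then (w i'.1 : ℝ≥0∞) else 0) := by
    intro i'
    rw [phiFun_apply_ne d f i']
    congr 1
    simp only [eq_iff_iff]
    omega
  calc ∑ i ∈ Finset.univ.filter (fun i => k ≤ phiFun b d f i), (w i : ℝ≥0∞)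
      = ∑ i : ι, (if k ≤ phiFun b d f i then (w i : ℝ≥0∞) else 0) := Finset.sum_filter _ _
    _ = (if k ≤ phiFun b d f b then (w b : ℝ≥0∞) else 0)
        + ∑ i ∈ Finset.univ.erase b, (if k ≤ phiFun b d f i then (w i : ℝ≥0∞) else 0) :=
          (Finset.add_sum_erase _ _ (Finset.mem_univ b)).symm
    _ = ∑ i ∈ Finset.univ.erase b, (if k ≤ phiFun b d f i then (w i : ℝ≥0∞) else 0) := by
          rw [phiFun_apply_b, if_neg (by omega), zero_add]
    _ = ∑ i' : {i : ι // i ≠ b}, (if k ≤ phiFun b d f i'.1 then (w i'.1 : ℝ≥0∞) else 0) :=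
          Finset.sum_subtype (p := fun i => i ≠ b) (Finset.univ.erase b) (by simp)
            (fun i => if k ≤ phiFun b d f i then (w i : ℝ≥0∞) else 0)
    _ = ∑ i' : {i : ι // i ≠ b}, (if k - (d : ℕ) ≤ f i' then (w i'.1 : ℝ≥0∞) else 0) :=
          Finset.sum_congr rfl fun i' _ => step i'
    _ = ∑ i' ∈ Finset.univ.filter (fun i' : {i : ι // i ≠ b} => k - d ≤ f i'), (w i'.1 : ℝ≥0∞) :=
          (Finset.sum_filter _ _).symm



lemma term_phi {ι : Type} [Fintype ι] [DecidableEq ι] (a : ℝ≥0∞) (w : ι → ℕ) (b : ι) (d : ℕ+)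
    (f : {i : ι // i ≠ b} → ℕ) (hf1 : ∀ i, 1 ≤ f i) :
    term a w (phiFun b d f)
      = (a / ((∑ i, (w i : ℝ≥0∞)) + a)) ^ (d : ℕ)
        * term a (fun i' : {i : ι // i ≠ b} => w i'.1) f := by
  unfold term
  rw [sup_phiFun, prod_Icc_one, prod_Icc_one, add_comm (Finset.univ.sup f) (d : ℕ),
    Finset.prod_range_add]
  congr 1
  · have h : ∀ j ∈ Finset.range (d : ℕ),
        (a / ((∑ i ∈ Finset.univ.filter (fun i => j + 1 ≤ phiFun b d f i), (w i : ℝ≥0∞)) + a))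
          = a / ((∑ i, (w i : ℝ≥0∞)) + a) := by
      intro j hj
      rw [Finset.mem_range] at hj
      rw [gsum_phi_le w b d f hf1 (by omega)]
    rw [Finset.prod_congr rfl h, Finset.prod_const, Finset.card_range]
  · refine Finset.prod_congr rfl fun j hj => ?_
    rw [gsum_phi_gt w b d f (k := (d : ℕ) + j + 1) (by omega)]
    have hdj : (d : ℕ) + j + 1 - (d : ℕ) = j + 1 := by omega
    rw [hdj]



def phi {ι : Type} [DecidableEq ι]
    (t : Σ b : ι, ℕ+ × {f : {i : ι // i ≠ b} → ℕ // Function.Injective f ∧ ∀ i, 1 ≤ f i}) :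
    {f : ι → ℕ // Function.Injective f ∧ ∀ i, 1 ≤ f i} := by
  refine ⟨phiFun t.1 t.2.1 t.2.2.1, ?_, ?_⟩
  · intro i j h
    by_cases hi : i = t.1 <;> by_cases hj : j = t.1
    · rw [hi, hj]
    · exfalso
      rw [hi, phiFun_apply_b, phiFun_apply_ne t.2.1 t.2.2.1 ⟨j, hj⟩] at h
      have := t.2.2.2.2 ⟨j, hj⟩
      omega
    · exfalso
      rw [hj, phiFun_apply_b, phiFun_apply_ne t.2.1 t.2.2.1 ⟨i, hi⟩] at h
      have := t.2.2.2.2 ⟨i, hi⟩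
      omega
    · have h' : t.2.2.1 ⟨i, hi⟩ = t.2.2.1 ⟨j, hj⟩ := by
        rw [phiFun_apply_ne t.2.1 t.2.2.1 ⟨i, hi⟩, phiFun_apply_ne t.2.1 t.2.2.1 ⟨j, hj⟩] at h
        omega
      exact congrArg Subtype.val (t.2.2.2.1 h')
  · intro i
    by_cases hi : i = t.1
    · rw [hi, phiFun_apply_b]; exact t.2.1.2
    · rw [phiFun_apply_ne t.2.1 t.2.2.1 ⟨i, hi⟩]
      have := t.2.1.pos
      omega

lemma phi_bij {ι : Type} [Fintype ι] [DecidableEq ι] [Nonempty ι] :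
    Function.Bijective (phi (ι := ι)) := by
  constructor
  · rintro ⟨b1, d1, f1, hf1inj, hf11⟩ ⟨b2, d2, f2, hf2inj, hf21⟩ h
    have hfun : phiFun b1 d1 f1 = phiFun b2 d2 f2 := congrArg Subtype.val h
    have hb : b1 = b2 := by
      by_contra hne
      have h1 := congrFun hfun b1
      have h2 := congrFun hfun b2
      rw [phiFun_apply_b, phiFun_apply_ne d2 f2 ⟨b1, hne⟩] at h1
      rw [phiFun_apply_ne d1 f1 ⟨b2, fun e => hne e.symm⟩, phiFun_apply_b] at h2
      have x1 := hf21 ⟨b1, hne⟩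
      have x2 := hf11 ⟨b2, fun e => hne e.symm⟩
      omega
    subst hb
    have hd : d1 = d2 := by
      have := congrFun hfun b1
      rw [phiFun_apply_b, phiFun_apply_b] at this
      exact PNat.coe_injective this
    subst hd
    have hf : f1 = f2 := by
      funext i
      have := congrFun hfun i.1
      rw [phiFun_apply_ne d1 f1 i, phiFun_apply_ne d1 f2 i] at this
      omega
    subst hf
    rfl
  · rintro ⟨g, hginj, hg1⟩
    obtain ⟨b, -, hbmin⟩ := Finset.exists_min_image Finset.univ g Finset.univ_nonempty
    have hlt : ∀ i : {i : ι // i ≠ b}, g b < g i.1 := by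
      intro i
      rcases lt_or_eq_of_le (hbmin i.1 (Finset.mem_univ i.1)) with h | h
      · exact h
      · exact absurd (hginj h) (Ne.symm i.2)
    refine ⟨⟨b, ⟨⟨g b, hg1 b⟩, ⟨fun i => g i.1 - g b, ?_, ?_⟩⟩⟩, ?_⟩
    · intro i j hij
      have hi := hlt i
      have hj := hlt j
      have : g i.1 = g j.1 := by simp only at hij; omega
      exact Subtype.ext (hginj this)
    · intro i
      have := hlt i
      simp only
      omega
    · apply Subtype.ext
      funext i
      show phiFun b ⟨g b, _⟩ (fun i => g i.1 - g b) i = g i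
      by_cases h : i = b
      · subst h; exact phiFun_apply_b _ _ _
      · refine (phiFun_apply_ne _ _ ⟨i, h⟩).trans ?_
        have h2 : g b < g i := hlt ⟨i, h⟩
        show g i - g b + g b = g i
        omega



lemma core (a : ℝ≥0∞) (ha : a ≠ 0) (ha' : a ≠ ⊤) :
    ∀ (N : ℕ) (ι : Type) (_ : Fintype ι) (_ : DecidableEq ι) (w : ι → ℕ),
      Fintype.card ι = N → (∀ i, 0 < w i) →
      ∑' f : {f : ι → ℕ // Function.Injective f ∧ ∀ i, 1 ≤ f i}, term a w f.1
        = a ^ N / ∏ i, (w i : ℝ≥0∞) := by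
  intro N
  induction N with
  | zero =>
    intro ι _ _ w hcard hw
    haveI : IsEmpty ι := Fintype.card_eq_zero_iff.mp hcard
    haveI : Unique {f : ι → ℕ // Function.Injective f ∧ ∀ i, 1 ≤ f i} :=
      { default := ⟨fun i => isEmptyElim i, fun i => isEmptyElim i, fun i => isEmptyElim i⟩
        uniq := fun f => Subtype.ext (funext fun i => isEmptyElim i) }
    rw [tsum_eq_single default (fun b hb => absurd (Subsingleton.elim b default) hb)]
    unfold term
    simp [Finset.univ_eq_empty]
  | succ N ih =>
    intro ι _ _ w hcard hw
    haveI : Nonempty ι := Fintype.card_pos_iff.mp (by omega)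
    set W : ℝ≥0∞ := ∑ i, (w i : ℝ≥0∞) with hWdef
    have hWnat : W = ((∑ i, w i : ℕ) : ℝ≥0∞) := by rw [hWdef, Nat.cast_sum]
    have hW0 : W ≠ 0 := by
      obtain ⟨i0⟩ := ‹Nonempty ι›
      intro h
      rw [Finset.sum_eq_zero_iff] at h
      have := h i0 (Finset.mem_univ i0)
      rw [Nat.cast_eq_zero] at this
      exact absurd this (hw i0).ne'
    have hWtop : W ≠ ⊤ := by rw [hWnat]; exact ENNReal.natCast_ne_top _
    set P : ℝ≥0∞ := ∏ i, (w i : ℝ≥0∞) with hPdef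
    -- inner sums
    have inner : ∀ b : ι,
        ∑' p : ℕ+ × {f : {i : ι // i ≠ b} → ℕ // Function.Injective f ∧ ∀ i, 1 ≤ f i},
          term a w (phiFun b p.1 p.2.1)
        = (a / W) * (a ^ N / ∏ i' : {i : ι // i ≠ b}, (w i'.1 : ℝ≥0∞)) := by
      intro b
      have hcard' : Fintype.card {i : ι // i ≠ b} = N := by
        have h1 : Fintype.card {i : ι // ¬ i = b} = Fintype.card ι - Fintype.card {i : ι // i = b} :=
          Fintype.card_subtype_compl _
        have h2 : Fintype.card {i : ι // i = b} = 1 := Fintype.card_subtype_eq b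
        have h3 : Fintype.card {i : ι // i ≠ b} = Fintype.card {i : ι // ¬ i = b} := rfl
        omega
      have hstep : ∀ p : ℕ+ × {f : {i : ι // i ≠ b} → ℕ // Function.Injective f ∧ ∀ i, 1 ≤ f i},
          term a w (phiFun b p.1 p.2.1)
            = (a / (W + a)) ^ (p.1 : ℕ) * term a (fun i' : {i : ι // i ≠ b} => w i'.1) p.2.1 :=
        fun p => term_phi a w b p.1 p.2.1 p.2.2.2
      calc ∑' p : ℕ+ × {f : {i : ι // i ≠ b} → ℕ // Function.Injective f ∧ ∀ i, 1 ≤ f i},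
            term a w (phiFun b p.1 p.2.1)
          = ∑' (d : ℕ+) (f' : {f : {i : ι // i ≠ b} → ℕ // Function.Injective f ∧ ∀ i, 1 ≤ f i}),
              (a / (W + a)) ^ (d : ℕ) * term a (fun i' : {i : ι // i ≠ b} => w i'.1) f'.1 := by
            rw [ENNReal.tsum_prod']
            exact tsum_congr fun d => tsum_congr fun f' => hstep (d, f')
        _ = ∑' (d : ℕ+), (a / (W + a)) ^ (d : ℕ)
              * ∑' (f' : {f : {i : ι // i ≠ b} → ℕ // Function.Injective f ∧ ∀ i, 1 ≤ f i}),
                  term a (fun i' : {i : ι // i ≠ b} => w i'.1) f'.1 :=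
            tsum_congr fun d => ENNReal.tsum_mul_left
        _ = (∑' (d : ℕ+), (a / (W + a)) ^ (d : ℕ))
              * ∑' (f' : {f : {i : ι // i ≠ b} → ℕ // Function.Injective f ∧ ∀ i, 1 ≤ f i}),
                  term a (fun i' : {i : ι // i ≠ b} => w i'.1) f'.1 := ENNReal.tsum_mul_right
        _ = (a / W) * (a ^ N / ∏ i' : {i : ι // i ≠ b}, (w i'.1 : ℝ≥0∞)) := by
            rw [geom_sum a W ha ha' hW0 hWtop,
              ih {i : ι // i ≠ b} inferInstance inferInstance (fun i' => w i'.1) hcard'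
                (fun i' => hw i'.1)]
    -- main computation
    rw [← Equiv.tsum_eq (Equiv.ofBijective phi (phi_bij (ι := ι))) (fun f => term a w f.1)]
    have hphi : ∀ t, term a w ((Equiv.ofBijective phi (phi_bij (ι := ι)) t)
          : {f : ι → ℕ // Function.Injective f ∧ ∀ i, 1 ≤ f i}).1
        = term a w (phiFun t.1 t.2.1 t.2.2.1) := fun t => rfl
    calc ∑' t, term a w ((Equiv.ofBijective phi (phi_bij (ι := ι)) t).1)
        = ∑' (b : ι) (p : ℕ+ × {f : {i : ι // i ≠ b} → ℕ // Function.Injective f ∧ ∀ i, 1 ≤ f i}),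
            term a w (phiFun b p.1 p.2.1) := by
          rw [tsum_congr hphi, ENNReal.tsum_sigma']
      _ = ∑ b : ι, (a / W) * (a ^ N / ∏ i' : {i : ι // i ≠ b}, (w i'.1 : ℝ≥0∞)) := by
          rw [tsum_fintype]
          exact Finset.sum_congr rfl fun b _ => inner b
      _ = ∑ b : ι, (w b : ℝ≥0∞) * ((a / W) * (a ^ N / P)) := by
          refine Finset.sum_congr rfl fun b _ => ?_
          have hb0 : (w b : ℝ≥0∞) ≠ 0 := Nat.cast_ne_zero.mpr (hw b).ne'
          have hbt : (w b : ℝ≥0∞) ≠ ⊤ := ENNReal.natCast_ne_top _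
          have hP : (w b : ℝ≥0∞) * ∏ i' : {i : ι // i ≠ b}, (w i'.1 : ℝ≥0∞) = P := by
            rw [hPdef,
              ← Finset.prod_subtype (p := fun i => i ≠ b) (Finset.univ.erase b) (by simp)
                (fun i => (w i : ℝ≥0∞))]
            exact Finset.mul_prod_erase Finset.univ (fun i => (w i : ℝ≥0∞)) (Finset.mem_univ b)
          rw [← ENNReal.mul_div_mul_left (a ^ N)
              (∏ i' : {i : ι // i ≠ b}, (w i'.1 : ℝ≥0∞)) hb0 hbt, hP, mul_div_assoc]
          ring
      _ = W * ((a / W) * (a ^ N / P)) := by rw [← Finset.sum_mul, ← hWdef]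
      _ = a ^ (N + 1) / P := by
          rw [← mul_assoc, ENNReal.mul_div_cancel hW0 hWtop, div_eq_mul_inv, div_eq_mul_inv,
            ← mul_assoc, ← pow_succ']



variable {n : ℕ} {C : Finset (Finset (Fin n))}

lemma blk_unique (hdisj : ∀ c ∈ C, ∀ c' ∈ C, c ≠ c' → Disjoint c c')
    {p : Fin n} {c c' : Finset (Fin n)} (hc : c ∈ C) (hc' : c' ∈ C)
    (hp : p ∈ c) (hp' : p ∈ c') : c = c' := by
  by_contra hne
  exact absurd hp' (Finset.disjoint_left.mp (hdisj c hc c' hc' hne) hp)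

noncomputable def e2 (hne : ∀ c ∈ C, c.Nonempty)
    (hdisj : ∀ c ∈ C, ∀ c' ∈ C, c ≠ c' → Disjoint c c')
    (hcover : ∀ p : Fin n, ∃ c ∈ C, p ∈ c) :
    {f : {c // c ∈ C} → ℕ // Function.Injective f ∧ ∀ c, 1 ≤ f c} ≃
    {z : Fin n → ℕ // (∀ j, 1 ≤ z j) ∧
        ∀ p q : Fin n, z p = z q ↔ ∃ c ∈ C, p ∈ c ∧ q ∈ c} where
  toFun f := ⟨fun p => f.1 ⟨(hcover p).choose, (hcover p).choose_spec.1⟩, by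
    refine ⟨fun j => f.2.2 _, fun p q => ⟨fun h => ?_, fun h => ?_⟩⟩
    · have hb := f.2.1 h
      refine ⟨(hcover p).choose, (hcover p).choose_spec.1, (hcover p).choose_spec.2, ?_⟩
      have : (hcover q).choose = (hcover p).choose := congrArg Subtype.val hb.symm
      rw [← this]
      exact (hcover q).choose_spec.2
    · obtain ⟨c, hcC, hpc, hqc⟩ := h
      have h1 : (hcover p).choose = c :=
        blk_unique hdisj (hcover p).choose_spec.1 hcC (hcover p).choose_spec.2 hpc
      have h2 : (hcover q).choose = c :=
        blk_unique hdisj (hcover q).choose_spec.1 hcC (hcover q).choose_spec.2 hqc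
      exact congrArg f.1 (Subtype.ext (h1.trans h2.symm))⟩
  invFun z := ⟨fun c => z.1 (hne c.1 c.2).choose, by
    constructor
    · intro c c' h
      obtain ⟨c0, hc0, hpc0, hqc0⟩ := (z.2.2 _ _).mp h
      have h1 : c.1 = c0 := blk_unique hdisj c.2 hc0 (hne c.1 c.2).choose_spec hpc0
      have h2 : c'.1 = c0 := blk_unique hdisj c'.2 hc0 (hne c'.1 c'.2).choose_spec hqc0
      exact Subtype.ext (h1.trans h2.symm)
    · intro c
      exact z.2.1 _⟩
  left_inv f := by
    apply Subtype.ext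
    funext c
    show f.1 ⟨(hcover (hne c.1 c.2).choose).choose,
        (hcover (hne c.1 c.2).choose).choose_spec.1⟩ = f.1 c
    exact congrArg f.1 (Subtype.ext (blk_unique hdisj
      (hcover (hne c.1 c.2).choose).choose_spec.1 c.2
      (hcover (hne c.1 c.2).choose).choose_spec.2 (hne c.1 c.2).choose_spec))
  right_inv z := by
    apply Subtype.ext
    funext p
    show z.1 (hne (hcover p).choose (hcover p).choose_spec.1).choose = z.1 p
    exact (z.2.2 _ _).mpr ⟨(hcover p).choose, (hcover p).choose_spec.1,
      (hne (hcover p).choose (hcover p).choose_spec.1).choose_spec,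
      (hcover p).choose_spec.2⟩

lemma sup_bridge (hne : ∀ c ∈ C, c.Nonempty)
    (hdisj : ∀ c ∈ C, ∀ c' ∈ C, c ≠ c' → Disjoint c c')
    (hcover : ∀ p : Fin n, ∃ c ∈ C, p ∈ c) (f : {c // c ∈ C} → ℕ) :
    Finset.univ.sup (fun p : Fin n => f ⟨(hcover p).choose, (hcover p).choose_spec.1⟩)
      = Finset.univ.sup f := by
  apply le_antisymm
  · exact Finset.sup_le fun p _ => Finset.le_sup (Finset.mem_univ _)
  · apply Finset.sup_le
    intro c _
    have hpt := (hne c.1 c.2).choose_spec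
    set pt := (hne c.1 c.2).choose with hptdef
    have hceq : (⟨(hcover pt).choose, (hcover pt).choose_spec.1⟩ : {c // c ∈ C}) = c :=
      Subtype.ext (blk_unique hdisj (hcover pt).choose_spec.1 c.2 (hcover pt).choose_spec.2 hpt)
    calc f c = f ⟨(hcover pt).choose, (hcover pt).choose_spec.1⟩ := by rw [hceq]
      _ ≤ _ := Finset.le_sup (f := fun p : Fin n =>
          f ⟨(hcover p).choose, (hcover p).choose_spec.1⟩) (Finset.mem_univ pt)

lemma card_bridge (hne : ∀ c ∈ C, c.Nonempty)
    (hdisj : ∀ c ∈ C, ∀ c' ∈ C, c ≠ c' → Disjoint c c')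
    (hcover : ∀ p : Fin n, ∃ c ∈ C, p ∈ c) (f : {c // c ∈ C} → ℕ) (k : ℕ) :
    (Finset.univ.filter
        (fun p : Fin n => k ≤ f ⟨(hcover p).choose, (hcover p).choose_spec.1⟩)).card
      = ∑ c ∈ Finset.univ.filter (fun c : {c // c ∈ C} => k ≤ f c), c.1.card := by
  classical
  have huniv : (Finset.univ : Finset (Fin n)) = C.attach.biUnion (fun c => c.1) := by
    ext p
    simp only [Finset.mem_univ, Finset.mem_biUnion, Finset.mem_attach, true_and, true_iff]
    obtain ⟨c, hc, hp⟩ := hcover p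
    exact ⟨⟨c, hc⟩, hp⟩
  have hdisj' : (C.attach : Set {c // c ∈ C}).PairwiseDisjoint (fun c => c.1) :=
    fun c _ c' _ hcc' => hdisj c.1 c.2 c'.1 c'.2 (fun e => hcc' (Subtype.ext e))
  calc (Finset.univ.filter
        (fun p : Fin n => k ≤ f ⟨(hcover p).choose, (hcover p).choose_spec.1⟩)).card
      = ∑ p : Fin n,
          (if k ≤ f ⟨(hcover p).choose, (hcover p).choose_spec.1⟩ then 1 else 0) :=
        Finset.card_filter _ _
    _ = ∑ c ∈ C.attach, ∑ p ∈ c.1,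
          (if k ≤ f ⟨(hcover p).choose, (hcover p).choose_spec.1⟩ then 1 else 0) := by
        rw [huniv, Finset.sum_biUnion hdisj']
    _ = ∑ c ∈ C.attach, (if k ≤ f c then c.1.card else 0) := by
        refine Finset.sum_congr rfl fun c _ => ?_
        have hpteq : ∀ p ∈ c.1,
            (if k ≤ f ⟨(hcover p).choose, (hcover p).choose_spec.1⟩ then (1:ℕ) else 0)
              = (if k ≤ f c then 1 else 0) := by
          intro p hp
          have hceq : (⟨(hcover p).choose, (hcover p).choose_spec.1⟩ : {c // c ∈ C}) = c :=
            Subtype.ext (blk_unique hdisj (hcover p).choose_spec.1 c.2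
              (hcover p).choose_spec.2 hp)
          rw [hceq]
        rw [Finset.sum_congr rfl hpteq]
        by_cases h : k ≤ f c <;> simp [h]
    _ = ∑ c ∈ Finset.univ.filter (fun c : {c // c ∈ C} => k ≤ f c), c.1.card := by
        rw [Finset.sum_filter, Finset.univ_eq_attach]


end Stmt6Aux

open Stmt6Aux

/-- Lemma B: for any partition `C` of `{1,...,n}`, the sum over all `z ∈ {1,2,...}^n`
inducing the partition `C` of `∏_{k=1}^{m(z)} α/(g_k(z)+α)` equals `α^{|C|} / ∏_{c ∈ C} |c|`,
where `m(z) = max_i z_i` and `g_k(z) = #{i : z_i ≥ k}`. -/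
theorem stmt6 (n : ℕ) (hn : 1 ≤ n) (α : ℝ) (hα : 0 < α)
    (C : Finset (Finset (Fin n)))
    (hne : ∀ c ∈ C, c.Nonempty)
    (hdisj : ∀ c ∈ C, ∀ c' ∈ C, c ≠ c' → Disjoint c c')
    (hcover : ∀ p : Fin n, ∃ c ∈ C, p ∈ c) :
    ∑' z : {z : Fin n → ℕ // (∀ j, 1 ≤ z j) ∧
        ∀ p q : Fin n, z p = z q ↔ ∃ c ∈ C, p ∈ c ∧ q ∈ c},
      ∏ k ∈ Finset.Icc 1 (Finset.univ.sup z.1),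
        (α / ((Finset.univ.filter (fun i => k ≤ z.1 i)).card + α))
      = α ^ C.card / ∏ c ∈ C, (c.card : ℝ) := by
  classical
  set a : ℝ≥0∞ := ENNReal.ofReal α with hadef
  have ha0 : a ≠ 0 := by
    rw [hadef, Ne, ENNReal.ofReal_eq_zero, not_le]
    exact hα
  have hat : a ≠ ⊤ := ENNReal.ofReal_ne_top
  set w : {c // c ∈ C} → ℕ := fun c => c.1.card with hwdef
  have hw : ∀ c, 0 < w c := fun c => Finset.card_pos.mpr (hne c.1 c.2)
  have key : ∑' z : {z : Fin n → ℕ // (∀ j, 1 ≤ z j) ∧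
        ∀ p q : Fin n, z p = z q ↔ ∃ c ∈ C, p ∈ c ∧ q ∈ c},
      ∏ k ∈ Finset.Icc 1 (Finset.univ.sup z.1),
        (a / (((Finset.univ.filter (fun i => k ≤ z.1 i)).card : ℝ≥0∞) + a))
      = a ^ C.card / ∏ c ∈ C, (c.card : ℝ≥0∞) := by
    rw [← Equiv.tsum_eq (e2 hne hdisj hcover) (fun z => ∏ k ∈ Finset.Icc 1 (Finset.univ.sup z.1),
      (a / (((Finset.univ.filter (fun i => k ≤ z.1 i)).card : ℝ≥0∞) + a)))]
    have hterm : ∀ f : {f : {c // c ∈ C} → ℕ // Function.Injective f ∧ ∀ c, 1 ≤ f c},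
        (∏ k ∈ Finset.Icc 1 (Finset.univ.sup ((e2 hne hdisj hcover f)).1),
          (a / (((Finset.univ.filter (fun i => k ≤ ((e2 hne hdisj hcover f)).1 i)).card : ℝ≥0∞) + a)))
        = term a w f.1 := by
      intro f
      have hz : ((e2 hne hdisj hcover) f).1
          = fun p => f.1 ⟨(hcover p).choose, (hcover p).choose_spec.1⟩ := rfl
      unfold term
      simp only [hz]
      rw [sup_bridge hne hdisj hcover f.1]
      refine Finset.prod_congr rfl fun k _ => ?_
      rw [card_bridge hne hdisj hcover f.1 k, Nat.cast_sum]
    rw [tsum_congr hterm,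
      core a ha0 hat (Fintype.card {c // c ∈ C}) {c // c ∈ C} inferInstance inferInstance w rfl hw,
      Fintype.card_coe]
    congr 1
    exact Finset.prod_coe_sort C (fun c => (c.card : ℝ≥0∞))
  have hnt : ∀ z : {z : Fin n → ℕ // (∀ j, 1 ≤ z j) ∧
        ∀ p q : Fin n, z p = z q ↔ ∃ c ∈ C, p ∈ c ∧ q ∈ c},
      (∏ k ∈ Finset.Icc 1 (Finset.univ.sup z.1),
        (a / (((Finset.univ.filter (fun i => k ≤ z.1 i)).card : ℝ≥0∞) + a))) ≠ ⊤ := by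
    intro z
    refine (ENNReal.prod_lt_top fun k _ => ?_).ne
    refine ENNReal.div_lt_top hat fun h => ha0 ?_
    exact (by simpa using h : _ ∧ a = 0).2
  have hfac : ∀ (m : ℕ), (a / ((m : ℝ≥0∞) + a)).toReal = α / ((m : ℝ) + α) := by
    intro m
    rw [ENNReal.toReal_div, ENNReal.toReal_add (ENNReal.natCast_ne_top m) hat,
      ENNReal.toReal_natCast, hadef, ENNReal.toReal_ofReal hα.le]
  have hterm_real : ∀ z : {z : Fin n → ℕ // (∀ j, 1 ≤ z j) ∧
        ∀ p q : Fin n, z p = z q ↔ ∃ c ∈ C, p ∈ c ∧ q ∈ c},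
      ∏ k ∈ Finset.Icc 1 (Finset.univ.sup z.1),
        (α / ((Finset.univ.filter (fun i => k ≤ z.1 i)).card + α))
      = (∏ k ∈ Finset.Icc 1 (Finset.univ.sup z.1),
          (a / (((Finset.univ.filter (fun i => k ≤ z.1 i)).card : ℝ≥0∞) + a))).toReal := by
    intro z
    rw [ENNReal.toReal_prod]
    exact Finset.prod_congr rfl fun k _ => (hfac _).symm
  rw [tsum_congr hterm_real, ← ENNReal.tsum_toReal_eq hnt, key, ENNReal.toReal_div,
    ENNReal.toReal_pow, hadef, ENNReal.toReal_ofReal hα.le, ENNReal.toReal_prod]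
  congr 1
end

section
/- The Pólya urn sequence is a Beta mixture of i.i.d. Bernoullis: for any binary sequence (y_1,...,y_n) with y_1 = 1 and s = Σ y_i, one has (∏ of urn conditional probabilities) = ∫_0^1 v^{s-1}(1-v)^{n-s} · α(1-v)^{α-1} dv, i.e., the urn probability equals the probability of the same sequence under v ~ Beta(1,α), y_1 = 1, and y_2,...,y_n | v i.i.d. Bernoulli(v). -/
open Finset intervalIntegral MeasureTheory

lemma int_one_sub (β : ℝ) (hβ : 0 < β) :
    IntervalIntegrable (fun v : ℝ => (1-v) ^ (β-1)) volume 0 1 := by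
  have h := intervalIntegral.intervalIntegrable_rpow' (a := 0) (b := 1)
    (r := β - 1) (by linarith)
  simpa using (h.comp_sub_left 1).symm

lemma integ (β : ℝ) (hβ : 0 < β) (s : ℕ) :
    IntervalIntegrable (fun v : ℝ => v ^ s * (1-v) ^ (β-1)) volume 0 1 :=
  (int_one_sub β hβ).continuousOn_mul (continuous_pow s).continuousOn

lemma J_eval (s : ℕ) : ∀ β : ℝ, 0 < β →
    (∫ v in (0:ℝ)..1, v ^ s * (1-v) ^ (β-1))
      = (Nat.factorial s : ℝ) / ∏ k ∈ range (s+1), (β + k) := by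
  induction s with
  | zero =>
    intro β hβ
    simp only [pow_zero, one_mul]
    have h := intervalIntegral.integral_comp_sub_left (a := (0:ℝ)) (b := 1)
      (fun x : ℝ => x ^ (β-1)) 1
    simp only [sub_zero, sub_self] at h
    rw [h, integral_rpow (Or.inl (by linarith))]
    rw [Real.one_rpow]
    rw [Real.zero_rpow (by linarith : β - 1 + 1 ≠ 0)]
    simp
  | succ s ih =>
    intro β hβ
    have hβ1 : (0:ℝ) < β + 1 := by linarith
    have key : Set.EqOn (fun v : ℝ => v ^ s * (1-v)^(β-1))
        (fun v : ℝ => (v ^ s * (1-v)^((β+1)-1)) + v ^ (s+1) * (1-v)^(β-1))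
        (Set.uIcc 0 1) := by
      intro v hv
      rw [Set.uIcc_of_le (by norm_num)] at hv
      obtain ⟨h0, h1⟩ := hv
      show v ^ s * (1-v)^(β-1) = (v ^ s * (1-v)^((β+1)-1)) + v ^ (s+1) * (1-v)^(β-1)
      rcases eq_or_lt_of_le h1 with h1 | h1
      · subst h1
        simp only [sub_self, add_sub_cancel_right]
        rw [Real.zero_rpow (by linarith : β ≠ 0)]
        ring
      · have hpos : 0 < 1 - v := by linarith
        have : (1-v) ^ ((β+1)-1) = (1-v)^(β-1) * (1-v) := by
          rw [add_sub_cancel_right]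
          simpa using Real.rpow_add_one (ne_of_gt hpos) (β-1)
        rw [this, pow_succ]
        ring
    have hsplit := intervalIntegral.integral_congr (μ := volume) key
    rw [intervalIntegral.integral_add (integ (β+1) hβ1 s) (integ β hβ s.succ)] at hsplit
    have e1 := ih (β+1) hβ1
    have e2 := ih β hβ
    have : (∫ v in (0:ℝ)..1, v ^ (s+1) * (1-v) ^ (β-1))
        = (Nat.factorial s : ℝ) / ∏ k ∈ range (s+1), (β + ↑k) - (Nat.factorial s : ℝ) / ∏ k ∈ range (s+1), (β + 1 + ↑k) := by
      rw [← e1, ← e2, hsplit]; ring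
    rw [this]
    -- algebra
    have hP2a : ∏ k ∈ range (s+2), (β + (k:ℝ)) = (∏ k ∈ range (s+1), (β + k)) * (β + (s+1)) := by
      rw [prod_range_succ]; push_cast; ring_nf
    have hP2b : ∏ k ∈ range (s+2), (β + (k:ℝ)) = β * ∏ k ∈ range (s+1), (β + 1 + k) := by
      rw [prod_range_succ']
      simp only [Nat.cast_zero, add_zero, Nat.cast_add, Nat.cast_one]
      rw [mul_comm]
      congr 1
      exact Finset.prod_congr rfl fun k _ => by ring
    have h0 : (∏ k ∈ range (s+1), (β + (k:ℝ))) ≠ 0 :=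
      ne_of_gt (Finset.prod_pos fun k _ => by positivity)
    have h1 : (∏ k ∈ range (s+1), (β + 1 + (k:ℝ))) ≠ 0 :=
      ne_of_gt (Finset.prod_pos fun k _ => by positivity)
    have hrel : (∏ k ∈ range (s+1), (β + (k:ℝ))) * (β + ((s:ℝ) + 1))
        = β * ∏ k ∈ range (s+1), (β + 1 + (k:ℝ)) := hP2a.symm.trans hP2b
    rw [show s + 1 + 1 = s + 2 from rfl, hP2b]
    rw [Nat.factorial_succ]
    push_cast
    field_simp
    linear_combination (-1 : ℝ) * hrel

lemma sum_ge_one (y : ℕ → ℕ) (hy1 : y 1 = 1) (n : ℕ) (hn : 1 ≤ n) :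
    1 ≤ ∑ i ∈ Icc 1 n, y i := by
  calc 1 = y 1 := hy1.symm
  _ ≤ ∑ i ∈ Icc 1 n, y i :=
    Finset.single_le_sum (fun i _ => Nat.zero_le _) (by simp [hn])

lemma sum_le_n (y : ℕ → ℕ) (n : ℕ) (hybin : ∀ i ∈ Icc 1 n, y i ≤ 1) :
    ∑ i ∈ Icc 1 n, y i ≤ n := by
  calc ∑ i ∈ Icc 1 n, y i ≤ ∑ i ∈ Icc 1 n, 1 := Finset.sum_le_sum hybin
  _ = n := by simp

lemma urn_prod (α : ℝ) (hα : 0 < α) (y : ℕ → ℕ) (hy1 : y 1 = 1) :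
    ∀ n, 1 ≤ n → (∀ i ∈ Icc 1 n, y i ≤ 1) →
    (∏ i ∈ Icc 2 n,
        (if y i = 1 then ((∑ j ∈ Ico 1 i, y j : ℕ) : ℝ) / (α + i - 1)
         else 1 - ((∑ j ∈ Ico 1 i, y j : ℕ) : ℝ) / (α + i - 1)))
      = (Nat.factorial ((∑ i ∈ Icc 1 n, y i) - 1) : ℝ)
          * (∏ k ∈ range (n - ∑ i ∈ Icc 1 n, y i), (α + k)) /
        ∏ k ∈ Ico 1 n, (α + k) := by
  intro n
  induction n with
  | zero => intro h; omega
  | succ n ih =>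
    intro _ hybin
    rcases Nat.eq_or_lt_of_le (Nat.one_le_iff_ne_zero.mpr (Nat.succ_ne_zero n)) with h1 | h1
    · -- n + 1 = 1
      have hn0 : n = 0 := by omega
      subst hn0
      simp [hy1]
    · -- n ≥ 1
      have hn : 1 ≤ n := by omega
      have hybin' : ∀ i ∈ Icc 1 n, y i ≤ 1 := fun i hi =>
        hybin i (by simp at hi ⊢; omega)
      have ihn := ih hn hybin'
      set s := ∑ i ∈ Icc 1 n, y i with hs
      have hs1 : 1 ≤ s := sum_ge_one y hy1 n hn
      have hsn : s ≤ n := sum_le_n y n hybin'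
      have hIco : Ico 1 (n+1) = Icc 1 n := by
        rw [Finset.Ico_add_one_right_eq_Icc]
      have hsum1 : ∑ i ∈ Icc 1 (n+1), y i = s + y (n+1) := by
        rw [← Finset.Ico_add_one_right_eq_Icc, Finset.sum_Ico_succ_top (by omega), hIco]
      have hprod : ∏ i ∈ Icc 2 (n+1),
          (if y i = 1 then ((∑ j ∈ Ico 1 i, y j : ℕ) : ℝ) / (α + i - 1)
           else 1 - ((∑ j ∈ Ico 1 i, y j : ℕ) : ℝ) / (α + i - 1))
          = (∏ i ∈ Icc 2 n,
            (if y i = 1 then ((∑ j ∈ Ico 1 i, y j : ℕ) : ℝ) / (α + i - 1)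
             else 1 - ((∑ j ∈ Ico 1 i, y j : ℕ) : ℝ) / (α + i - 1)))
            * (if y (n+1) = 1 then ((∑ j ∈ Ico 1 (n+1), y j : ℕ) : ℝ) / (α + (n+1) - 1)
             else 1 - ((∑ j ∈ Ico 1 (n+1), y j : ℕ) : ℝ) / (α + (n+1) - 1)) := by
        rw [Finset.prod_Icc_succ_top (by omega)]
        norm_cast
      have hDn : ∏ k ∈ Ico 1 (n+1), (α + (k:ℝ)) = (∏ k ∈ Ico 1 n, (α + (k:ℝ))) * (α + n) := by
        rw [Finset.prod_Ico_succ_top (by omega)]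
      have hD0 : (∏ k ∈ Ico 1 n, (α + (k:ℝ))) ≠ 0 :=
        ne_of_gt (Finset.prod_pos fun k _ => by positivity)
      have hαn : (α + (n:ℝ)) ≠ 0 := by positivity
      have hcast : (α + ((n:ℝ)+1) - 1) = α + n := by ring
      rw [hprod, ihn]
      rcases Nat.le_one_iff_eq_zero_or_eq_one.mp (hybin (n+1) (by simp)) with h | h
      · -- y (n+1) = 0
        have hsum0 : ∑ i ∈ Icc 1 (n+1), y i = s := by simp [hsum1, h]
        rw [hsum0, hDn]
        have hns : n + 1 - s = (n - s) + 1 := by omega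
        rw [hns, prod_range_succ]
        have : ((n - s : ℕ) : ℝ) = (n : ℝ) - s := by
          push_cast [Nat.cast_sub hsn]; ring
        simp only [h, if_neg (by omega : ¬ (0 = 1)), hIco]
        push_cast [hcast, this, ← hs]
        field_simp
        ring
      · -- y (n+1) = 1
        have hsum0 : ∑ i ∈ Icc 1 (n+1), y i = s + 1 := by rw [hsum1, h]
        rw [hsum0, hDn]
        have hfac : (Nat.factorial (s + 1 - 1) : ℝ) = s * Nat.factorial (s - 1) := by
          have : s + 1 - 1 = (s - 1) + 1 := by omega
          rw [this, Nat.factorial_succ]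
          push_cast
          rw [Nat.cast_sub hs1]
          push_cast
          ring
        have hns : n + 1 - (s + 1) = n - s := by omega
        simp only [h, if_pos rfl, hIco, hns, hfac]
        push_cast [hcast, ← hs]
        field_simp

/-- The Pólya urn sequence is a Beta mixture of i.i.d. Bernoullis: for a binary sequence
`(y 1, ..., y n)` with `y 1 = 1` and `s = ∑ y i`, the product of the urn conditional
probabilities equals `∫_0^1 v^{s-1} (1-v)^{n-s} · α(1-v)^{α-1} dv`, the probability of the
same sequence when `v ~ Beta(1,α)`, `y 1 = 1`, and `y 2, ..., y n | v` are i.i.d.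
`Bernoulli(v)`. -/
theorem stmt10 (α : ℝ) (hα : 0 < α) (n : ℕ) (hn : 1 ≤ n)
    (y : ℕ → ℕ) (hy1 : y 1 = 1) (hybin : ∀ i ∈ Finset.Icc 1 n, y i ≤ 1) :
    (∏ i ∈ Finset.Icc 2 n,
        (if y i = 1 then ((∑ j ∈ Finset.Ico 1 i, y j : ℕ) : ℝ) / (α + i - 1)
         else 1 - ((∑ j ∈ Finset.Ico 1 i, y j : ℕ) : ℝ) / (α + i - 1)))
      = ∫ v in (0:ℝ)..1,
          v ^ ((∑ i ∈ Finset.Icc 1 n, y i) - 1) *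
            (1 - v) ^ (n - ∑ i ∈ Finset.Icc 1 n, y i) * (α * (1 - v) ^ (α - 1)) := by
  have hs1 : 1 ≤ ∑ i ∈ Icc 1 n, y i := sum_ge_one y hy1 n hn
  have hsn : (∑ i ∈ Icc 1 n, y i) ≤ n := sum_le_n y n hybin
  set s := ∑ i ∈ Finset.Icc 1 n, y i with hs
  set β : ℝ := ((n - s : ℕ) : ℝ) + α with hβdef
  have hβ : (0:ℝ) < β := by positivity
  have key : Set.EqOn
      (fun v : ℝ => v ^ (s - 1) * (1 - v) ^ (n - s) * (α * (1 - v) ^ (α - 1)))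
      (fun v : ℝ => α * (v ^ (s-1) * (1 - v) ^ (β - 1)))
      (Set.uIcc 0 1) := by
    intro v hv
    rw [Set.uIcc_of_le (by norm_num)] at hv
    obtain ⟨h0, h1⟩ := hv
    show v ^ (s-1) * (1-v)^(n-s) * (α * (1-v)^(α-1)) = α * (v^(s-1) * (1-v)^(β-1))
    rcases eq_or_lt_of_le h1 with h1 | h1
    · subst h1
      simp only [sub_self]
      rcases Nat.eq_or_lt_of_le hsn with he | hlt
      · have h0' : n - s = 0 := by omega
        rw [h0']
        simp [hβdef, h0']
      · have h0' : 1 ≤ n - s := by omega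
        rw [zero_pow (by omega : n - s ≠ 0)]
        rw [Real.zero_rpow (by
          have : (1:ℝ) ≤ ((n - s : ℕ) : ℝ) := by exact_mod_cast h0'
          simp only [hβdef]; intro hcon; nlinarith : β - 1 ≠ 0)]
        ring
    · have hpos : 0 < 1 - v := by linarith
      rw [show β - 1 = ((n-s:ℕ):ℝ) + (α-1) by rw [hβdef]; ring,
        Real.rpow_add hpos, Real.rpow_natCast]
      ring
  rw [intervalIntegral.integral_congr (μ := MeasureTheory.volume) key,
    intervalIntegral.integral_const_mul]
  have hJ := J_eval (s-1) β hβ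
  rw [Nat.sub_add_cancel hs1] at hJ
  rw [hJ]
  rw [urn_prod α hα y hy1 n hn hybin, ← hs]
  have hsplit : (∏ k ∈ range (n-s), (α+(k:ℝ))) * ∏ k ∈ range s, (β + (k:ℝ))
      = ∏ k ∈ range n, (α + (k:ℝ)) := by
    have := Finset.prod_range_add (fun k : ℕ => α + (k:ℝ)) (n-s) s
    rw [Nat.sub_add_cancel hsn] at this
    rw [this]
    congr 1
    exact Finset.prod_congr rfl fun k _ => by rw [hβdef]; push_cast; ring
  have hrangen : ∏ k ∈ range n, (α + (k:ℝ)) = α * ∏ k ∈ Ico 1 n, (α+(k:ℝ)) := by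
    rw [Finset.range_eq_Ico, Finset.prod_eq_prod_Ico_succ_bot (by omega : 0 < n)]
    simp
  have hmain : (∏ k ∈ range (n-s), (α+(k:ℝ))) * ∏ k ∈ range s, (β + (k:ℝ))
      = α * ∏ k ∈ Ico 1 n, (α+(k:ℝ)) := hsplit.trans hrangen
  have hD0 : (∏ k ∈ Ico 1 n, (α + (k:ℝ))) ≠ 0 :=
    ne_of_gt (Finset.prod_pos fun k _ => by positivity)
  have hB0 : (∏ k ∈ range s, (β + (k:ℝ))) ≠ 0 :=
    ne_of_gt (Finset.prod_pos fun k _ => by positivity)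
  field_simp
  linear_combination hmain
end

section
/- The Ewens/CRP formula defines a probability distribution: for α > 0 and n ≥ 1, the sum over all partitions C of {1,...,n} of α^{|C|} Γ(α)/Γ(n+α) · ∏_{c ∈ C} Γ(|c|) equals 1. -/
open Finset

namespace EwensAux

variable {X : Type*} [DecidableEq X]

def IsPart (s : Finset X) (C : Finset (Finset X)) : Prop :=
  (∀ c ∈ C, c.Nonempty) ∧ (∀ c ∈ C, ∀ c' ∈ C, c ≠ c' → Disjoint c c') ∧
  (∀ p ∈ s, ∃ c ∈ C, p ∈ c) ∧ (∀ c ∈ C, c ⊆ s)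

noncomputable def w (x : ℝ) (C : Finset (Finset X)) : ℝ :=
  x ^ C.card * ∏ c ∈ C, (Nat.factorial (c.card - 1) : ℝ)

def ins (a : X) (c : Finset X) (D : Finset (Finset X)) : Finset (Finset X) :=
  if c = ∅ then insert {a} D else insert (insert a c) (D.erase c)

def delA (a : X) (C : Finset (Finset X)) : Finset (Finset X) :=
  (C.image (fun c => c.erase a)).erase ∅

def mA (a : X) (C : Finset (Finset X)) : Finset X :=
  ((C.filter (fun c => a ∈ c)).biUnion id).erase a

lemma filter_block {a : X} {C : Finset (Finset X)} {b : Finset X}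
    (hdis : ∀ c ∈ C, ∀ c' ∈ C, c ≠ c' → Disjoint c c')
    (hb : b ∈ C) (hab : a ∈ b) : C.filter (fun c => a ∈ c) = {b} := by
  ext c
  simp only [mem_filter, mem_singleton]
  constructor
  · rintro ⟨hc, hac⟩
    by_contra h
    exact (disjoint_left.mp (hdis c hc b hb h) hac) hab
  · rintro rfl; exact ⟨hb, hab⟩

lemma mA_eq {a : X} {C : Finset (Finset X)} {b : Finset X}
    (hdis : ∀ c ∈ C, ∀ c' ∈ C, c ≠ c' → Disjoint c c')
    (hb : b ∈ C) (hab : a ∈ b) : mA a C = b.erase a := by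
  rw [mA, filter_block hdis hb hab, singleton_biUnion, id]

lemma image_erase_eq {a : X} {C : Finset (Finset X)} {b : Finset X}
    (hdis : ∀ c ∈ C, ∀ c' ∈ C, c ≠ c' → Disjoint c c')
    (hb : b ∈ C) (hab : a ∈ b) :
    C.image (fun c => c.erase a) = insert (b.erase a) (C.erase b) := by
  nth_rewrite 1 [← insert_erase hb]
  rw [image_insert]
  congr 1
  have h : ∀ c ∈ C.erase b, c.erase a = c := by
    intro c hc
    apply erase_eq_of_notMem
    intro hac
    exact (disjoint_left.mp (hdis c (mem_of_mem_erase hc) b hb (ne_of_mem_erase hc)) hac) hab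
  calc (C.erase b).image (fun c => c.erase a) = (C.erase b).image id :=
        image_congr (fun c hc => h c hc)
    _ = C.erase b := image_id

lemma mem_delA {a : X} {C : Finset (Finset X)} {d : Finset X} :
    d ∈ delA a C ↔ d ≠ ∅ ∧ ∃ c ∈ C, c.erase a = d := by
  simp [delA, mem_erase, mem_image]

/-- Forward: the restriction of a partition of `insert a s` is a partition of `s`. -/
lemma delA_isPart {a : X} {s : Finset X} (ha : a ∉ s) {C : Finset (Finset X)}
    (hC : IsPart (insert a s) C) : IsPart s (delA a C) := by
  obtain ⟨hne, hdis, hcov, hsub⟩ := hC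
  refine ⟨?_, ?_, ?_, ?_⟩
  · intro d hd
    exact nonempty_iff_ne_empty.mpr (mem_delA.mp hd).1
  · intro d hd d' hd' hdd'
    obtain ⟨-, c, hc, rfl⟩ := mem_delA.mp hd
    obtain ⟨-, c', hc', rfl⟩ := mem_delA.mp hd'
    have hcc' : c ≠ c' := fun h => hdd' (by rw [h])
    exact (hdis c hc c' hc' hcc').mono (erase_subset a c) (erase_subset a c')
  · intro p hp
    obtain ⟨c, hc, hpc⟩ := hcov p (mem_insert_of_mem hp)
    have hpa : p ≠ a := fun h => ha (h ▸ hp)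
    refine ⟨c.erase a, mem_delA.mpr ⟨?_, c, hc, rfl⟩, mem_erase.mpr ⟨hpa, hpc⟩⟩
    exact nonempty_iff_ne_empty.mp ⟨p, mem_erase.mpr ⟨hpa, hpc⟩⟩
  · intro d hd
    obtain ⟨-, c, hc, rfl⟩ := mem_delA.mp hd
    intro p hp
    have := hsub c hc (mem_of_mem_erase hp)
    rcases mem_insert.mp this with h | h
    · exact absurd h (mem_erase.mp hp).1
    · exact h

lemma mA_mem {a : X} {s : Finset X} {C : Finset (Finset X)}
    (hC : IsPart (insert a s) C) : mA a C ∈ insert ∅ (delA a C) := by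
  obtain ⟨b, hb, hab⟩ := hC.2.2.1 a (mem_insert_self a s)
  rw [mA_eq hC.2.1 hb hab]
  rcases eq_or_ne (b.erase a) ∅ with h | h
  · rw [h]; exact mem_insert_self _ _
  · exact mem_insert_of_mem (mem_delA.mpr ⟨h, b, hb, rfl⟩)

lemma erase_not_mem_erase {a : X} {C : Finset (Finset X)} {b : Finset X}
    (hne : ∀ c ∈ C, c.Nonempty)
    (hdis : ∀ c ∈ C, ∀ c' ∈ C, c ≠ c' → Disjoint c c')
    (hb : b ∈ C) : b.erase a ∉ C.erase b := by
  intro h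
  obtain ⟨p, hp⟩ := hne _ (mem_of_mem_erase h)
  exact (disjoint_left.mp (hdis _ (mem_of_mem_erase h) b hb (ne_of_mem_erase h)) hp)
    (mem_of_mem_erase hp)

lemma empty_not_mem_erase {C : Finset (Finset X)} {b : Finset X}
    (hne : ∀ c ∈ C, c.Nonempty) : (∅ : Finset X) ∉ C.erase b := by
  intro h
  simpa using hne ∅ (mem_of_mem_erase h)

/-- Forward-backward: `ins` recovers `C`. -/
lemma ins_mA_delA {a : X} {s : Finset X} {C : Finset (Finset X)}
    (hC : IsPart (insert a s) C) : ins a (mA a C) (delA a C) = C := by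
  obtain ⟨hne, hdis, hcov, hsub⟩ := hC
  obtain ⟨b, hb, hab⟩ := hcov a (mem_insert_self a s)
  rw [mA_eq hdis hb hab, delA, image_erase_eq hdis hb hab]
  rcases eq_or_ne (b.erase a) ∅ with h | h
  · have hba : b = {a} := by
      rcases (erase_eq_empty_iff b a).mp h with h' | h'
      · exact absurd h' (hne b hb).ne_empty
      · exact h'
    rw [h, ins, if_pos rfl, erase_insert (empty_not_mem_erase hne), ← hba, insert_erase hb]
  · rw [ins, if_neg h, erase_insert_of_ne h, erase_eq_of_notMem (empty_not_mem_erase hne),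
      insert_erase hab, erase_insert (erase_not_mem_erase hne hdis hb), insert_erase hb]

/-- Backward: inserting `a` gives a partition of `insert a s`. -/
lemma ins_isPart {a : X} {s : Finset X} (ha : a ∉ s) {D : Finset (Finset X)}
    (hD : IsPart s D) {c : Finset X} (hc : c ∈ insert ∅ D) :
    IsPart (insert a s) (ins a c D) := by
  obtain ⟨hne, hdis, hcov, hsub⟩ := hD
  have haD : ∀ d ∈ D, a ∉ d := fun d hd h => ha (hsub d hd h)
  rcases mem_insert.mp hc with rfl | hcD
  · rw [ins, if_pos rfl]
    refine ⟨?_, ?_, ?_, ?_⟩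
    · intro d hd
      rcases mem_insert.mp hd with rfl | hd
      · exact singleton_nonempty a
      · exact hne d hd
    · intro d hd d' hd' hdd'
      rcases mem_insert.mp hd with rfl | hd <;> rcases mem_insert.mp hd' with rfl | hd'
      · exact absurd rfl hdd'
      · exact disjoint_singleton_left.mpr (haD d' hd')
      · exact disjoint_singleton_right.mpr (haD d hd)
      · exact hdis d hd d' hd' hdd'
    · intro p hp
      rcases mem_insert.mp hp with rfl | hp
      · exact ⟨{p}, mem_insert_self _ _, mem_singleton_self p⟩
      · obtain ⟨d, hd, hpd⟩ := hcov p hp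
        exact ⟨d, mem_insert_of_mem hd, hpd⟩
    · intro d hd
      rcases mem_insert.mp hd with rfl | hd
      · simp
      · exact (hsub d hd).trans (subset_insert a s)
  · have hcne : c ≠ ∅ := (hne c hcD).ne_empty
    rw [ins, if_neg hcne]
    refine ⟨?_, ?_, ?_, ?_⟩
    · intro d hd
      rcases mem_insert.mp hd with rfl | hd
      · exact insert_nonempty a c
      · exact hne d (mem_of_mem_erase hd)
    · intro d hd d' hd' hdd'
      rcases mem_insert.mp hd with rfl | hd <;> rcases mem_insert.mp hd' with rfl | hd'
      · exact absurd rfl hdd'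
      · rw [disjoint_insert_left]
        refine ⟨fun h => haD d' (mem_of_mem_erase hd') h, ?_⟩
        exact hdis c hcD d' (mem_of_mem_erase hd') (fun h => (mem_erase.mp hd').1 h.symm)
      · rw [disjoint_insert_right]
        refine ⟨fun h => haD d (mem_of_mem_erase hd) h, ?_⟩
        exact hdis d (mem_of_mem_erase hd) c hcD (mem_erase.mp hd).1
      · exact hdis d (mem_of_mem_erase hd) d' (mem_of_mem_erase hd') hdd'
    · intro p hp
      rcases mem_insert.mp hp with rfl | hp
      · exact ⟨insert p c, mem_insert_self _ _, mem_insert_self p c⟩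
      · obtain ⟨d, hd, hpd⟩ := hcov p hp
        rcases eq_or_ne d c with rfl | hdc
        · exact ⟨insert a d, mem_insert_self _ _, mem_insert_of_mem hpd⟩
        · exact ⟨d, mem_insert_of_mem (mem_erase.mpr ⟨hdc, hd⟩), hpd⟩
    · intro d hd
      rcases mem_insert.mp hd with rfl | hd
      · exact insert_subset_insert a (hsub c hcD)
      · exact (hsub d (mem_of_mem_erase hd)).trans (subset_insert a s)

/-- Backward-forward: `delA`/`mA` recover the data. -/
lemma delA_ins {a : X} {s : Finset X} (ha : a ∉ s) {D : Finset (Finset X)}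
    (hD : IsPart s D) {c : Finset X} (hc : c ∈ insert ∅ D) :
    delA a (ins a c D) = D ∧ mA a (ins a c D) = c := by
  obtain ⟨hne, hdis, hcov, hsub⟩ := hD
  have haD : ∀ d ∈ D, a ∉ d := fun d hd h => ha (hsub d hd h)
  have hemp : (∅ : Finset X) ∉ D := fun h => by simpa using hne ∅ h
  have hdis' := (ins_isPart ha ⟨hne, hdis, hcov, hsub⟩ hc).2.1
  have himgD : ∀ (E : Finset (Finset X)), (∀ d ∈ E, a ∉ d) →
      E.image (fun d => d.erase a) = E := by
    intro E hE
    calc E.image (fun d => d.erase a) = E.image id :=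
          image_congr (fun d hd => erase_eq_of_notMem (hE d hd))
      _ = E := image_id
  rcases mem_insert.mp hc with rfl | hcD
  · have hins : ins a (∅ : Finset X) D = insert {a} D := by rw [ins, if_pos rfl]
    constructor
    · rw [hins, delA, image_insert, himgD D haD]
      simp only [erase_singleton]
      exact erase_insert hemp
    · rw [hins] at hdis' ⊢
      rw [mA_eq hdis' (mem_insert_self _ _) (mem_singleton_self a)]
      exact erase_singleton a
  · have hcne : c ≠ ∅ := (hne c hcD).ne_empty
    have hac : a ∉ c := haD c hcD
    have hins : ins a c D = insert (insert a c) (D.erase c) := by rw [ins, if_neg hcne]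
    have hbmem : insert a c ∈ ins a c D := hins ▸ mem_insert_self _ _
    constructor
    · rw [hins, delA, image_insert, himgD (D.erase c) (fun d hd => haD d (mem_of_mem_erase hd)),
        erase_insert hac, insert_erase hcD]
      exact erase_eq_of_notMem hemp
    · rw [mA_eq hdis' hbmem (mem_insert_self a c), erase_insert hac]

open scoped Classical in
lemma sum_ins (x : ℝ) {a : X} {s : Finset X} (ha : a ∉ s) {D : Finset (Finset X)}
    (hD : IsPart s D) :
    ∑ c ∈ insert ∅ D, w x (ins a c D) = (x + s.card) * w x D := by
  obtain ⟨hne, hdis, hcov, hsub⟩ := hD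
  have haD : ∀ d ∈ D, a ∉ d := fun d hd h => ha (hsub d hd h)
  have hemp : (∅ : Finset X) ∉ D := fun h => by simpa using hne ∅ h
  rw [sum_insert hemp]
  have haSD : ({a} : Finset X) ∉ D := fun h => haD _ h (mem_singleton_self a)
  have h1 : w x (ins a ∅ D) = x * w x D := by
    rw [ins, if_pos rfl, w, w, card_insert_of_notMem haSD, prod_insert haSD]
    simp [pow_succ]
    ring
  have h2 : ∀ c ∈ D, w x (ins a c D) = (c.card : ℝ) * w x D := by
    intro c hc
    have hcne : c ≠ ∅ := (hne c hc).ne_empty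
    have hac : a ∉ c := haD c hc
    have hmem : insert a c ∉ D.erase c :=
      fun h => haD _ (mem_of_mem_erase h) (mem_insert_self a c)
    have hDpos : 0 < D.card := card_pos.mpr ⟨c, hc⟩
    rw [ins, if_neg hcne, w, w, card_insert_of_notMem hmem, prod_insert hmem,
      card_erase_of_mem hc, card_insert_of_notMem hac, Nat.sub_add_cancel hDpos]
    have hfac : Nat.factorial (c.card + 1 - 1) = c.card * Nat.factorial (c.card - 1) := by
      simp only [Nat.add_sub_cancel]
      exact (Nat.mul_factorial_pred (card_pos.mpr (hne c hc)).ne').symm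
    rw [hfac, ← Finset.mul_prod_erase D _ hc]
    push_cast
    ring
  rw [sum_congr rfl h2, ← sum_mul, h1]
  have hcards : ∑ c ∈ D, (c.card : ℝ) = (s.card : ℝ) := by
    have hs : s = D.biUnion (fun c => c) := by
      ext p
      simp only [mem_biUnion]
      constructor
      · exact hcov p
      · rintro ⟨c, hc, hpc⟩
        exact hsub c hc hpc
    have : s.card = ∑ c ∈ D, c.card := by
      rw [hs, card_biUnion (fun c hc c' hc' h => hdis c hc c' hc' h)]
    rw [this]
    push_cast
    rfl
  rw [hcards]
  ring

open scoped Classical in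
lemma key [Fintype X] (x : ℝ) (s : Finset X) :
    ∑ C ∈ univ.filter (IsPart s), w x C = ∏ k ∈ range s.card, (x + k) := by
  induction s using Finset.induction_on with
  | empty =>
    have : (univ.filter (IsPart (∅ : Finset X))) = {∅} := by
      ext C
      simp only [mem_filter, mem_univ, true_and, mem_singleton]
      constructor
      · rintro ⟨hne, -, -, hsub⟩
        rw [eq_empty_iff_forall_notMem]
        intro c hc
        obtain ⟨p, hp⟩ := hne c hc
        exact notMem_empty p (hsub c hc hp)
      · rintro rfl
        exact ⟨by simp, by simp, by simp, by simp⟩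
    rw [this]
    simp [w]
  | @insert a s ha ih =>
    have hset : (univ.filter (IsPart (insert a s)) : Finset (Finset (Finset X))) =
        ((univ.filter (IsPart s)).sigma fun D => insert ∅ D).image
          (fun p => ins a p.2 p.1) := by
      ext C
      simp only [mem_filter, mem_univ, true_and, mem_image, mem_sigma]
      constructor
      · intro hC
        exact ⟨⟨delA a C, mA a C⟩, ⟨delA_isPart ha hC, mA_mem hC⟩, ins_mA_delA hC⟩
      · rintro ⟨⟨D, c⟩, ⟨hD, hc⟩, rfl⟩
        exact ins_isPart ha hD hc
    rw [hset, sum_image, sum_sigma]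
    · have heach : ∀ D ∈ univ.filter (IsPart s),
          ∑ c ∈ insert ∅ D, w x (ins a c D) = (x + s.card) * w x D := by
        intro D hD
        exact sum_ins x ha (mem_filter.mp hD).2
      rw [sum_congr rfl heach, ← mul_sum, ih, card_insert_of_notMem ha, prod_range_succ]
      ring
    · rintro ⟨D, c⟩ h ⟨D', c'⟩ h' heq
      simp only [mem_coe, mem_sigma, mem_filter, mem_univ, true_and] at h h'
      obtain ⟨h1, h2⟩ := delA_ins ha h.1 h.2
      obtain ⟨h1', h2'⟩ := delA_ins ha h'.1 h'.2
      have hDD : D = D' := by rw [← h1, show ins a c D = ins a c' D' from heq, h1']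
      have hcc : c = c' := by rw [← h2, show ins a c D = ins a c' D' from heq, h2']
      subst hDD; subst hcc; rfl

lemma Gamma_add_nat (α : ℝ) (hα : 0 < α) (n : ℕ) :
    Real.Gamma (n + α) = Real.Gamma α * ∏ k ∈ range n, (α + k) := by
  induction n with
  | zero => simp
  | succ n ih =>
    have h : ((n + 1 : ℕ) : ℝ) + α = ((n : ℝ) + α) + 1 := by push_cast; ring
    have hpos : (n : ℝ) + α ≠ 0 := by positivity
    rw [h, Real.Gamma_add_one hpos, ih, prod_range_succ]
    ring

end EwensAux

/- The Ewens/CRP formula defines a probability distribution: for `α > 0` and `n ≥ 1`,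
the sum over all set partitions `C` of `{1,...,n}` of
`α^{|C|} Γ(α)/Γ(n+α) · ∏_{c ∈ C} Γ(|c|)` equals `1`. -/
open scoped Classical in
theorem stmt11 (α : ℝ) (hα : 0 < α) (n : ℕ) (hn : 1 ≤ n) :
    ∑ C ∈ Finset.univ.filter (fun C : Finset (Finset (Fin n)) =>
        (∀ c ∈ C, c.Nonempty) ∧ (∀ c ∈ C, ∀ c' ∈ C, c ≠ c' → Disjoint c c') ∧
        (∀ p : Fin n, ∃ c ∈ C, p ∈ c)),
      α ^ C.card * Real.Gamma α / Real.Gamma (n + α) * ∏ c ∈ C, Real.Gamma c.card = 1 := by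
  open EwensAux in
  have hset : (Finset.univ.filter (fun C : Finset (Finset (Fin n)) =>
        (∀ c ∈ C, c.Nonempty) ∧ (∀ c ∈ C, ∀ c' ∈ C, c ≠ c' → Disjoint c c') ∧
        (∀ p : Fin n, ∃ c ∈ C, p ∈ c))) =
      Finset.univ.filter (EwensAux.IsPart Finset.univ) := by
    ext C
    simp only [Finset.mem_filter, Finset.mem_univ, true_and, EwensAux.IsPart]
    constructor
    · rintro ⟨h1, h2, h3⟩
      exact ⟨h1, h2, fun p _ => h3 p, fun c _ => Finset.subset_univ c⟩
    · rintro ⟨h1, h2, h3, h4⟩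
      exact ⟨h1, h2, fun p => h3 p (by trivial)⟩
  rw [hset]
  have hterm : ∀ C ∈ Finset.univ.filter (EwensAux.IsPart (Finset.univ : Finset (Fin n))),
      α ^ C.card * Real.Gamma α / Real.Gamma (n + α) * ∏ c ∈ C, Real.Gamma c.card =
      (Real.Gamma α / Real.Gamma (n + α)) * EwensAux.w α C := by
    intro C hC
    have hne := (Finset.mem_filter.mp hC).2.1
    have hprod : ∏ c ∈ C, Real.Gamma c.card = ∏ c ∈ C, (Nat.factorial (c.card - 1) : ℝ) := by
      apply Finset.prod_congr rfl
      intro c hc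
      obtain ⟨k, hk⟩ := Nat.exists_eq_succ_of_ne_zero (Finset.card_pos.mpr (hne c hc)).ne'
      rw [hk]
      have : ((k + 1 : ℕ) : ℝ) = (k : ℝ) + 1 := by push_cast; ring
      rw [this, Real.Gamma_nat_eq_factorial]
      norm_num
    rw [hprod, EwensAux.w]
    ring
  rw [Finset.sum_congr rfl hterm, ← Finset.mul_sum, EwensAux.key α (Finset.univ : Finset (Fin n)),
    EwensAux.Gamma_add_nat α hα n, Finset.card_univ, Fintype.card_fin]
  have hΓ : Real.Gamma α ≠ 0 := (Real.Gamma_pos_of_pos hα).ne'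
  have hprodne : (∏ k ∈ Finset.range n, (α + k)) ≠ 0 := by
    apply Finset.prod_ne_zero_iff.mpr
    intro k _
    positivity
  field_simp
end
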